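/- arXiv:1601.01136 — 4 statements merged into one kernel-verified Lean document; each statement's English description precedes it below -/
import Mathlib

section
/- For every λ > 0 and every ψ ∈ L²(ℝ^d), one has (L₀ + V)ψ = λψ if and only if Q_λ ψ = ψ. -/
open MeasureTheory Filter Metric Topology

noncomputable section

/-- Convolution of two functions on `ℝ^d`. -/
def conv {d : ℕ} (f g : EuclideanSpace ℝ (Fin d) → ℝ) : EuclideanSpace ℝ (Fin d) → ℝ :=
  fun x => ∫ y, f (x - y) * g y

/-- `convPow a n` is `a^{*(n+1)}`, the `(n+1)`-fold convolution power of `a`. -/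
def convPow {d : ℕ} (a : EuclideanSpace ℝ (Fin d) → ℝ) : ℕ → EuclideanSpace ℝ (Fin d) → ℝ
  | 0 => a
  | n + 1 => conv a (convPow a n)

/-- `G a lam x = Σ_{n=1}^∞ a^{*n}(x)/(lam+1)^n`. -/
def G {d : ℕ} (a : EuclideanSpace ℝ (Fin d) → ℝ) (lam : ℝ) : EuclideanSpace ℝ (Fin d) → ℝ :=
  fun x => ∑' n : ℕ, convPow a n x / (lam + 1) ^ (n + 1)

namespace EigenAux

lemma abs_mul_le_half (u v : ℝ) : |u * v| ≤ (u ^ 2 + v ^ 2) / 2 := by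
  have h := sq_nonneg (|u| - |v|)
  have h2 := abs_mul u v
  nlinarith [sq_abs u, sq_abs v, abs_nonneg u, abs_nonneg v]

structure IsKer {d : ℕ} (C : ℝ) (k : EuclideanSpace ℝ (Fin d) → ℝ) : Prop where
  cont : Continuous k
  nonneg : ∀ x, 0 ≤ k x
  bdd : ∀ x, k x ≤ C
  int : Integrable k
  mass : ∫ x, k x = 1

variable {d : ℕ} {C : ℝ} {k a h : EuclideanSpace ℝ (Fin d) → ℝ}

lemma IsKer.C_nonneg (hk : IsKer C k) : 0 ≤ C := le_trans (hk.nonneg 0) (hk.bdd 0)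

lemma IsKer.sq_int (hk : IsKer C k) : Integrable (fun y => k y ^ 2) := by
  refine Integrable.mono' (hk.int.const_mul C) ((hk.cont.pow 2).aestronglyMeasurable) ?_
  filter_upwards with y
  rw [Real.norm_eq_abs, abs_of_nonneg (sq_nonneg _)]
  nlinarith [hk.nonneg y, hk.bdd y]

lemma IsKer.sq_integral_le (hk : IsKer C k) : ∫ y, k y ^ 2 ≤ C := by
  calc ∫ y, k y ^ 2 ≤ ∫ y, C * k y :=
        integral_mono hk.sq_int (hk.int.const_mul C) (fun y => by nlinarith [hk.nonneg y, hk.bdd y])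
    _ = C := by rw [integral_const_mul, hk.mass, mul_one]

lemma IsKer.mass_sub (hk : IsKer C k) (x : EuclideanSpace ℝ (Fin d)) : ∫ y, k (x - y) = 1 := by
  rw [integral_sub_left_eq_self k volume x, hk.mass]

lemma IsKer.integrable_mul_sq (hk : IsKer C k)
    (hm : AEStronglyMeasurable h volume) (hh : Integrable (fun y => h y ^ 2)) (x : EuclideanSpace ℝ (Fin d)) :
    Integrable fun y => k (x - y) * h y := by
  have hmeas : AEStronglyMeasurable (fun y => k (x - y) * h y) volume :=
    ((hk.cont.comp (continuous_const.sub continuous_id)).aestronglyMeasurable).mul hm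
  refine Integrable.mono' (((hk.sq_int.comp_sub_left x).add hh).div_const 2) hmeas ?_
  filter_upwards with y
  simpa only [Real.norm_eq_abs, Pi.add_apply] using abs_mul_le_half (k (x - y)) (h y)

lemma IsKer.norm_integral_mul_sq_le (hk : IsKer C k)
    (hm : AEStronglyMeasurable h volume) (hh : Integrable (fun y => h y ^ 2)) (x : EuclideanSpace ℝ (Fin d)) :
    ∫ y, ‖k (x - y) * h y‖ ≤ (C + ∫ y, h y ^ 2) / 2 := by
  have h1 : ∫ y, ‖k (x - y) * h y‖ ≤ ∫ y, (k (x - y) ^ 2 + h y ^ 2) / 2 :=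
    integral_mono (hk.integrable_mul_sq hm hh x).norm
      (((hk.sq_int.comp_sub_left x).add hh).div_const 2)
      (fun y => by simpa only [Real.norm_eq_abs] using abs_mul_le_half (k (x - y)) (h y))
  have h2 : ∫ y, (k (x - y) ^ 2 + h y ^ 2) / 2
      = ((∫ y, k (x - y) ^ 2) + ∫ y, h y ^ 2) / 2 := by
    rw [integral_div, integral_add (hk.sq_int.comp_sub_left x) hh]
  have h3 : ∫ y, k (x - y) ^ 2 = ∫ y, k y ^ 2 :=
    integral_sub_left_eq_self (fun y => k y ^ 2) volume x
  have h4 := hk.sq_integral_le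
  rw [h2, h3] at h1
  linarith

lemma IsKer.abs_conv_le_sq (hk : IsKer C k)
    (hm : AEStronglyMeasurable h volume) (hh : Integrable (fun y => h y ^ 2)) (x : EuclideanSpace ℝ (Fin d)) :
    |conv k h x| ≤ (C + ∫ y, h y ^ 2) / 2 := by
  have := norm_integral_le_integral_norm (μ := volume) (fun y => k (x - y) * h y)
  rw [Real.norm_eq_abs] at this
  exact this.trans (hk.norm_integral_mul_sq_le hm hh x)

lemma IsKer.integrable_mul_bdd (hk : IsKer C k)
    (hm : AEStronglyMeasurable h volume) {B : ℝ} (hB : ∀ y, |h y| ≤ B) (x : EuclideanSpace ℝ (Fin d)) :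
    Integrable fun y => k (x - y) * h y := by
  have hmeas : AEStronglyMeasurable (fun y => k (x - y) * h y) volume :=
    ((hk.cont.comp (continuous_const.sub continuous_id)).aestronglyMeasurable).mul hm
  refine Integrable.mono' ((hk.int.comp_sub_left x).mul_const B) hmeas ?_
  filter_upwards with y
  rw [Real.norm_eq_abs, abs_mul, abs_of_nonneg (hk.nonneg _)]
  exact mul_le_mul_of_nonneg_left (hB y) (hk.nonneg _)

lemma IsKer.norm_integral_mul_bdd_le (hk : IsKer C k)
    (hm : AEStronglyMeasurable h volume) {B : ℝ} (hB : ∀ y, |h y| ≤ B) (x : EuclideanSpace ℝ (Fin d)) :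
    ∫ y, ‖k (x - y) * h y‖ ≤ B := by
  calc ∫ y, ‖k (x - y) * h y‖ ≤ ∫ y, k (x - y) * B := by
        refine integral_mono (hk.integrable_mul_bdd hm hB x).norm
          ((hk.int.comp_sub_left x).mul_const B) (fun y => ?_)
        rw [Real.norm_eq_abs, abs_mul, abs_of_nonneg (hk.nonneg _)]
        exact mul_le_mul_of_nonneg_left (hB y) (hk.nonneg _)
    _ = B := by rw [integral_mul_const, hk.mass_sub x, one_mul]

lemma IsKer.abs_conv_le_bdd (hk : IsKer C k)
    (hm : AEStronglyMeasurable h volume) {B : ℝ} (hB : ∀ y, |h y| ≤ B) (x : EuclideanSpace ℝ (Fin d)) :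
    |conv k h x| ≤ B := by
  have := norm_integral_le_integral_norm (μ := volume) (fun y => k (x - y) * h y)
  rw [Real.norm_eq_abs] at this
  exact this.trans (hk.norm_integral_mul_bdd_le hm hB x)

lemma IsKer.conv_aesm (hk : IsKer C k) (hm : AEStronglyMeasurable h volume) :
    AEStronglyMeasurable (conv k h) volume := by
  have H : AEStronglyMeasurable (fun p : EuclideanSpace ℝ (Fin d) × EuclideanSpace ℝ (Fin d) => k (p.1 - p.2) * h p.2)
      ((volume : Measure (EuclideanSpace ℝ (Fin d))).prod (volume : Measure (EuclideanSpace ℝ (Fin d)))) :=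
    ((hk.cont.comp (continuous_fst.sub continuous_snd)).aestronglyMeasurable).mul hm.comp_snd
  exact H.integral_prod_right'

lemma conv_eq_convolution (f g : EuclideanSpace ℝ (Fin d) → ℝ) :
    conv f g = MeasureTheory.convolution g f (ContinuousLinearMap.mul ℝ ℝ) volume := by
  funext x
  simp only [conv, MeasureTheory.convolution_def, ContinuousLinearMap.mul_apply']
  exact integral_congr_ae (Eventually.of_forall fun y => mul_comm _ _)

lemma IsKer.conv_ker (ha : IsKer C a) (hk : IsKer C k) : IsKer C (conv a k) := by
  have hbdd : BddAbove (Set.range fun x => ‖a x‖) := by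
    refine ⟨C, ?_⟩
    rintro r ⟨x, rfl⟩
    show ‖a x‖ ≤ C
    rw [Real.norm_eq_abs, abs_of_nonneg (ha.nonneg x)]
    exact ha.bdd x
  refine ⟨?_, ?_, ?_, ?_, ?_⟩
  · rw [conv_eq_convolution]
    exact hbdd.continuous_convolution_right_of_integrable _ hk.int ha.cont
  · exact fun x => integral_nonneg fun y => mul_nonneg (ha.nonneg _) (hk.nonneg _)
  · intro x
    have hb : ∀ y, |k y| ≤ C := fun y => by
      rw [abs_of_nonneg (hk.nonneg y)]; exact hk.bdd y
    calc conv a k x ≤ ∫ y, C * k y := by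
          refine integral_mono (ha.integrable_mul_bdd hk.cont.aestronglyMeasurable hb x)
            (hk.int.const_mul C) (fun y => ?_)
          exact mul_le_mul_of_nonneg_right (ha.bdd _) (hk.nonneg _)
      _ = C := by rw [integral_const_mul, hk.mass, mul_one]
  · rw [conv_eq_convolution]
    exact hk.int.integrable_convolution _ ha.int
  · rw [conv_eq_convolution, integral_convolution _ hk.int ha.int]
    simp [hk.mass, ha.mass]

lemma IsKer.convPow_ker (ha : IsKer C a) : ∀ n, IsKer C (convPow a n)
  | 0 => ha
  | n + 1 => ha.conv_ker (ha.convPow_ker n)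


lemma conv_assoc_ker {d : ℕ} {C : ℝ} {a k : EuclideanSpace ℝ (Fin d) → ℝ}
    (ha : IsKer C a) (hk : IsKer C k)
    {h : EuclideanSpace ℝ (Fin d) → ℝ} (hm : AEStronglyMeasurable h volume)
    (hh : Integrable (fun y => h y ^ 2)) (x : EuclideanSpace ℝ (Fin d)) :
    ∫ y, a (x - y) * conv k h y = conv (conv a k) h x := by
  have hFm : AEStronglyMeasurable
      (fun p : EuclideanSpace ℝ (Fin d) × EuclideanSpace ℝ (Fin d) =>
        a (x - p.1) * (k (p.1 - p.2) * h p.2))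
      ((volume : Measure (EuclideanSpace ℝ (Fin d))).prod volume) :=
    ((ha.cont.comp (continuous_const.sub continuous_fst)).aestronglyMeasurable).mul
      (((hk.cont.comp (continuous_fst.sub continuous_snd)).aestronglyMeasurable).mul hm.comp_snd)
  have hG1m : AEStronglyMeasurable
      (fun p : EuclideanSpace ℝ (Fin d) × EuclideanSpace ℝ (Fin d) =>
        a (x - p.1) * k (p.1 - p.2) ^ 2)
      ((volume : Measure (EuclideanSpace ℝ (Fin d))).prod volume) :=
    ((ha.cont.comp (continuous_const.sub continuous_fst)).aestronglyMeasurable).mul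
      (((hk.cont.comp (continuous_fst.sub continuous_snd)).pow 2).aestronglyMeasurable)
  have hG1 : Integrable
      (fun p : EuclideanSpace ℝ (Fin d) × EuclideanSpace ℝ (Fin d) =>
        a (x - p.1) * k (p.1 - p.2) ^ 2)
      ((volume : Measure (EuclideanSpace ℝ (Fin d))).prod volume) := by
    refine (integrable_prod_iff hG1m).2 ⟨?_, ?_⟩
    · refine Eventually.of_forall fun y => ?_
      simpa using (hk.sq_int.comp_sub_left y).const_mul (a (x - y))
    · have heq : ∀ y : EuclideanSpace ℝ (Fin d),
          (∫ z, ‖a (x - y) * k (y - z) ^ 2‖) = a (x - y) * ∫ w, k w ^ 2 := by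
        intro y
        have h1 : (∫ z, ‖a (x - y) * k (y - z) ^ 2‖) = ∫ z, a (x - y) * k (y - z) ^ 2 := by
          refine integral_congr_ae (Eventually.of_forall fun z => ?_)
          simp only [Real.norm_eq_abs]
          exact abs_of_nonneg (mul_nonneg (ha.nonneg _) (sq_nonneg _))
        rw [h1, integral_const_mul, integral_sub_left_eq_self (fun w => k w ^ 2) volume y]
      refine Integrable.congr ((ha.int.comp_sub_left x).mul_const (∫ w, k w ^ 2)) ?_
      exact Eventually.of_forall fun y => (heq y).symm
  have hG2 : Integrable
      (fun p : EuclideanSpace ℝ (Fin d) × EuclideanSpace ℝ (Fin d) =>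
        a (x - p.1) * h p.2 ^ 2)
      ((volume : Measure (EuclideanSpace ℝ (Fin d))).prod volume) :=
    Integrable.mul_prod (ha.int.comp_sub_left x) hh
  have hF : Integrable
      (Function.uncurry fun y z => a (x - y) * (k (y - z) * h z))
      ((volume : Measure (EuclideanSpace ℝ (Fin d))).prod volume) := by
    refine Integrable.mono' ((hG1.add hG2).div_const 2) hFm ?_
    filter_upwards with p
    have h1 : |k (p.1 - p.2) * h p.2| ≤ (k (p.1 - p.2) ^ 2 + h p.2 ^ 2) / 2 :=
      abs_mul_le_half _ _
    show ‖a (x - p.1) * (k (p.1 - p.2) * h p.2)‖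
        ≤ (a (x - p.1) * k (p.1 - p.2) ^ 2 + a (x - p.1) * h p.2 ^ 2) / 2
    have h2 : ‖a (x - p.1) * (k (p.1 - p.2) * h p.2)‖
        = a (x - p.1) * |k (p.1 - p.2) * h p.2| := by
      rw [Real.norm_eq_abs, abs_mul, abs_of_nonneg (ha.nonneg _)]
    rw [h2]
    calc a (x - p.1) * |k (p.1 - p.2) * h p.2|
        ≤ a (x - p.1) * ((k (p.1 - p.2) ^ 2 + h p.2 ^ 2) / 2) :=
          mul_le_mul_of_nonneg_left h1 (ha.nonneg _)
      _ = (a (x - p.1) * k (p.1 - p.2) ^ 2 + a (x - p.1) * h p.2 ^ 2) / 2 := by ring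
  calc ∫ y, a (x - y) * conv k h y
      = ∫ y, ∫ z, a (x - y) * (k (y - z) * h z) := by
        refine integral_congr_ae (Eventually.of_forall fun y => ?_)
        exact (integral_const_mul _ _).symm
    _ = ∫ z, ∫ y, a (x - y) * (k (y - z) * h z) := integral_integral_swap hF
    _ = ∫ z, (∫ y, a (x - y) * k (y - z)) * h z := by
        refine integral_congr_ae (Eventually.of_forall fun z => ?_)
        show (∫ y, a (x - y) * (k (y - z) * h z)) = (∫ y, a (x - y) * k (y - z)) * h z
        rw [← integral_mul_const]
        exact integral_congr_ae (Eventually.of_forall fun y => by ring)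
    _ = ∫ z, conv a k (x - z) * h z := by
        refine integral_congr_ae (Eventually.of_forall fun z => ?_)
        show (∫ y, a (x - y) * k (y - z)) * h z = conv a k (x - z) * h z
        congr 1
        have hsub := integral_add_right_eq_self (μ := (volume : Measure (EuclideanSpace ℝ (Fin d))))
          (fun y => a (x - y) * k (y - z)) z
        rw [← hsub]
        refine integral_congr_ae (Eventually.of_forall fun y => ?_)
        show a (x - (y + z)) * k (y + z - z) = a (x - z - y) * k y
        rw [add_sub_cancel_right]
        congr 2
        abel
    _ = conv (conv a k) h x := rfl

end EigenAux

set_option maxHeartbeats 2000000 in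
/-- For every `λ > 0` and `ψ ∈ L²(ℝ^d)`:
`(L₀ + V)ψ = λψ` if and only if `Q_λ ψ = ψ`. -/
theorem eigen_equation_iff_Q_fixed_point (d : ℕ) (hd : 1 ≤ d)
    (a : EuclideanSpace ℝ (Fin d) → ℝ)
    (ha_cont : Continuous a) (ha_bdd : ∃ C, ∀ x, |a x| ≤ C)
    (ha_nonneg : ∀ x, 0 ≤ a x) (ha_even : ∀ x, a (-x) = a x)
    (ha_int : Integrable a) (ha_mass : ∫ x, a x = 1)
    (L₀ : Lp ℝ 2 (volume : Measure (EuclideanSpace ℝ (Fin d))) →L[ℝ]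
          Lp ℝ 2 (volume : Measure (EuclideanSpace ℝ (Fin d))))
    (hL₀ : ∀ u : Lp ℝ 2 (volume : Measure (EuclideanSpace ℝ (Fin d))),
      (L₀ u : EuclideanSpace ℝ (Fin d) → ℝ) =ᵐ[volume] fun x => ∫ y, a (x - y) * (u y - u x))
    (V : EuclideanSpace ℝ (Fin d) → ℝ) (hV_cont : Continuous V)
    (hV01 : ∀ x, 0 ≤ V x ∧ V x ≤ 1)
    (hV0 : Tendsto V (cocompact (EuclideanSpace ℝ (Fin d))) (𝓝 0))
    (Vop : Lp ℝ 2 (volume : Measure (EuclideanSpace ℝ (Fin d))) →L[ℝ]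
           Lp ℝ 2 (volume : Measure (EuclideanSpace ℝ (Fin d))))
    (hVop : ∀ u : Lp ℝ 2 (volume : Measure (EuclideanSpace ℝ (Fin d))),
      (Vop u : EuclideanSpace ℝ (Fin d) → ℝ) =ᵐ[volume] fun x => V x * u x)
    (lam : ℝ) (hlam : 0 < lam)
    (Q : Lp ℝ 2 (volume : Measure (EuclideanSpace ℝ (Fin d))) →L[ℝ]
         Lp ℝ 2 (volume : Measure (EuclideanSpace ℝ (Fin d))))
    (hQ : ∀ u : Lp ℝ 2 (volume : Measure (EuclideanSpace ℝ (Fin d))),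
      (Q u : EuclideanSpace ℝ (Fin d) → ℝ) =ᵐ[volume]
        fun x => (lam + 1 - V x)⁻¹ * ∫ y, G a lam (x - y) * V y * u y) :
    ∀ ψ : Lp ℝ 2 (volume : Measure (EuclideanSpace ℝ (Fin d))),
      (L₀ + Vop) ψ = lam • ψ ↔ Q ψ = ψ := by
  classical
  obtain ⟨C, hC⟩ := ha_bdd
  have hKa : EigenAux.IsKer C a :=
    ⟨ha_cont, ha_nonneg, fun x => le_trans (le_abs_self _) (hC x), ha_int, ha_mass⟩
  have hKn : ∀ n, EigenAux.IsKer C (convPow a n) := hKa.convPow_ker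
  have hC0 : 0 ≤ C := hKa.C_nonneg
  have hq0 : (0:ℝ) < lam + 1 := by linarith
  have hqne : lam + 1 ≠ 0 := ne_of_gt hq0
  have hr0 : (0:ℝ) ≤ (lam + 1)⁻¹ := by positivity
  have hr1 : (lam + 1)⁻¹ < 1 := by
    rw [inv_lt_one_iff₀]
    right; linarith
  have hcp : ∀ n : ℕ, convPow a (n + 1) = conv a (convPow a n) := fun n => rfl
  have hpow : ∀ n : ℕ, ((lam + 1) ^ (n + 1))⁻¹ ≤ ((lam + 1)⁻¹) ^ n := fun n => by
    rw [← inv_pow]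
    exact pow_le_pow_of_le_one hr0 hr1.le (Nat.le_succ n)
  have hpow0 : ∀ n : ℕ, (0:ℝ) ≤ ((lam + 1) ^ (n + 1))⁻¹ := fun n => by positivity
  intro ψ
  set u : EuclideanSpace ℝ (Fin d) → ℝ := ⇑ψ with hu
  have hu_m : AEStronglyMeasurable u volume := Lp.aestronglyMeasurable ψ
  have hu_sq : Integrable (fun y => u y ^ 2) := (Lp.memLp ψ).integrable_sq
  set f : EuclideanSpace ℝ (Fin d) → ℝ := fun y => V y * u y with hfdef
  have hf_m : AEStronglyMeasurable f volume := hV_cont.aestronglyMeasurable.mul hu_m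
  have hf_sq : Integrable (fun y => f y ^ 2) := by
    have hmsq : AEStronglyMeasurable (fun y => f y ^ 2) volume := by
      have : (fun y => f y * f y) = fun y => f y ^ 2 := funext fun y => (pow_two (f y)).symm
      exact this ▸ (hf_m.mul hf_m)
    refine Integrable.mono' hu_sq hmsq ?_
    filter_upwards with y
    rw [Real.norm_eq_abs, abs_of_nonneg (sq_nonneg _)]
    simp only [hfdef]
    have hV2 : V y ^ 2 ≤ 1 := by nlinarith [(hV01 y).1, (hV01 y).2]
    calc (V y * u y) ^ 2 = V y ^ 2 * u y ^ 2 := by ring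
      _ ≤ 1 * u y ^ 2 := mul_le_mul_of_nonneg_right hV2 (sq_nonneg _)
      _ = u y ^ 2 := one_mul _
  set Mu : ℝ := (C + ∫ y, u y ^ 2) / 2 with hMud
  set Mf : ℝ := (C + ∫ y, f y ^ 2) / 2 with hMfd
  have hMu0 : 0 ≤ Mu := by
    have h1 : 0 ≤ ∫ y, u y ^ 2 := integral_nonneg fun y => sq_nonneg _
    rw [hMud]; linarith
  have hMf0 : 0 ≤ Mf := by
    have h1 : 0 ≤ ∫ y, f y ^ 2 := integral_nonneg fun y => sq_nonneg _
    rw [hMfd]; linarith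
  have bndTu : ∀ n x, |conv (convPow a n) u x| ≤ Mu := fun n x =>
    (hKn n).abs_conv_le_sq hu_m hu_sq x
  have bndTf : ∀ n x, |conv (convPow a n) f x| ≤ Mf := fun n x =>
    (hKn n).abs_conv_le_sq hf_m hf_sq x
  have measTf : ∀ n, AEStronglyMeasurable (conv (convPow a n) f) volume := fun n =>
    (hKn n).conv_aesm hf_m
  have measTu : ∀ n, AEStronglyMeasurable (conv (convPow a n) u) volume := fun n =>
    (hKn n).conv_aesm hu_m
  have hgeo : Summable (fun n : ℕ => Mf * ((lam + 1)⁻¹) ^ n) :=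
    (summable_geometric_of_lt_one hr0 hr1).mul_left Mf
  have hSummf : ∀ x, Summable fun n => ((lam + 1) ^ (n + 1))⁻¹ * conv (convPow a n) f x := by
    intro x
    refine Summable.of_norm_bounded hgeo fun n => ?_
    rw [Real.norm_eq_abs, abs_mul, abs_of_nonneg (hpow0 n)]
    calc ((lam + 1) ^ (n + 1))⁻¹ * |conv (convPow a n) f x|
        ≤ ((lam + 1) ^ (n + 1))⁻¹ * Mf := mul_le_mul_of_nonneg_left (bndTf n x) (hpow0 n)
      _ ≤ ((lam + 1)⁻¹) ^ n * Mf := mul_le_mul_of_nonneg_right (hpow n) hMf0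
      _ = Mf * ((lam + 1)⁻¹) ^ n := mul_comm _ _
  set S : EuclideanSpace ℝ (Fin d) → ℝ :=
    fun x => ∑' n, ((lam + 1) ^ (n + 1))⁻¹ * conv (convPow a n) f x with hSdef
  -- Step 1 : the integral against G equals S.
  have swapG : ∀ x, (∫ y, G a lam (x - y) * V y * u y) = S x := by
    intro x
    have hre : ∀ y, G a lam (x - y) * V y * u y
        = ∑' n, ((lam + 1) ^ (n + 1))⁻¹ * (convPow a n (x - y) * f y) := by
      intro y
      rw [G, ← tsum_mul_right, ← tsum_mul_right]
      refine tsum_congr fun n => ?_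
      simp only [hfdef]
      ring
    calc (∫ y, G a lam (x - y) * V y * u y)
        = ∫ y, ∑' n, ((lam + 1) ^ (n + 1))⁻¹ * (convPow a n (x - y) * f y) :=
          integral_congr_ae (Eventually.of_forall hre)
      _ = ∑' n, ∫ y, ((lam + 1) ^ (n + 1))⁻¹ * (convPow a n (x - y) * f y) := by
          refine (integral_tsum_of_summable_integral_norm (fun n => ?_) ?_).symm
          · exact ((hKn n).integrable_mul_sq hf_m hf_sq x).const_mul _
          · refine Summable.of_nonneg_of_le (fun n => integral_nonneg fun y => norm_nonneg _)
              (fun n => ?_) hgeo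
            have h1 : (∫ y, ‖((lam + 1) ^ (n + 1))⁻¹ * (convPow a n (x - y) * f y)‖)
                = ((lam + 1) ^ (n + 1))⁻¹ * ∫ y, ‖convPow a n (x - y) * f y‖ := by
              rw [← integral_const_mul]
              refine integral_congr_ae (Eventually.of_forall fun y => ?_)
              show ‖((lam + 1) ^ (n + 1))⁻¹ * (convPow a n (x - y) * f y)‖
                  = ((lam + 1) ^ (n + 1))⁻¹ * ‖convPow a n (x - y) * f y‖
              rw [norm_mul, norm_inv, norm_pow, Real.norm_eq_abs, abs_of_pos hq0]
            rw [h1]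
            calc ((lam + 1) ^ (n + 1))⁻¹ * ∫ y, ‖convPow a n (x - y) * f y‖
                ≤ ((lam + 1) ^ (n + 1))⁻¹ * Mf :=
                  mul_le_mul_of_nonneg_left ((hKn n).norm_integral_mul_sq_le hf_m hf_sq x) (hpow0 n)
              _ ≤ ((lam + 1)⁻¹) ^ n * Mf := mul_le_mul_of_nonneg_right (hpow n) hMf0
              _ = Mf * ((lam + 1)⁻¹) ^ n := mul_comm _ _
      _ = S x := by
          show _ = ∑' n, ((lam + 1) ^ (n + 1))⁻¹ * conv (convPow a n) f x
          refine tsum_congr fun n => ?_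
          rw [integral_const_mul]
          rfl
  -- translating the eigen equation
  have key0 : ∀ x, (∫ y, a (x - y) * (u y - u x)) = conv a u x - u x := by
    intro x
    have h1 : Integrable (fun y => a (x - y) * u y) := hKa.integrable_mul_sq hu_m hu_sq x
    have h2 : Integrable (fun y => a (x - y) * u x) := (ha_int.comp_sub_left x).mul_const (u x)
    have h3 : (fun y => a (x - y) * (u y - u x)) = fun y => a (x - y) * u y - a (x - y) * u x :=
      funext fun y => by ring
    rw [h3, integral_sub h1 h2, integral_mul_const, hKa.mass_sub x, one_mul]
    rfl
  have hEigIff : (L₀ + Vop) ψ = lam • ψ ↔ (∀ᵐ x ∂(volume : Measure (EuclideanSpace ℝ (Fin d))),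
      conv a u x = (lam + 1 - V x) * u x) := by
    rw [Lp.ext_iff]
    have hL := hL₀ ψ
    have hV' := hVop ψ
    have hadd := Lp.coeFn_add (L₀ ψ) (Vop ψ)
    have hsmul := Lp.coeFn_smul lam ψ
    rw [ContinuousLinearMap.add_apply]
    constructor
    · intro hmain
      filter_upwards [hmain, hadd, hL, hV', hsmul] with x h1 h2 h3 h4 h5
      rw [h2] at h1
      simp only [Pi.add_apply] at h1
      rw [h3, h4, h5] at h1
      simp only [Pi.smul_apply, smul_eq_mul] at h1
      rw [key0 x] at h1
      linear_combination h1
    · intro hae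
      filter_upwards [hadd, hL, hV', hsmul, hae] with x h2 h3 h4 h5 h6
      rw [h2]
      simp only [Pi.add_apply]
      rw [h3, h4, h5]
      simp only [Pi.smul_apply, smul_eq_mul]
      rw [key0 x]
      linear_combination h6
  have hQIff : Q ψ = ψ ↔ (∀ᵐ x ∂(volume : Measure (EuclideanSpace ℝ (Fin d))),
      S x = (lam + 1 - V x) * u x) := by
    rw [Lp.ext_iff]
    have hQc := hQ ψ
    have hden : ∀ x : EuclideanSpace ℝ (Fin d), lam + 1 - V x ≠ 0 := fun x => by
      have := (hV01 x).2; intro hcon; linarith [hlam]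
    constructor
    · intro hmain
      filter_upwards [hQc.symm.trans hmain] with x h1
      show S x = (lam + 1 - V x) * u x
      rw [swapG x, inv_mul_eq_iff_eq_mul₀ (hden x)] at h1
      exact h1
    · intro hae
      refine hQc.trans ?_
      filter_upwards [hae] with x h1
      show (lam + 1 - V x)⁻¹ * (∫ y, G a lam (x - y) * V y * u y) = u x
      rw [swapG x, h1, ← mul_assoc, inv_mul_cancel₀ (hden x), one_mul]
  rw [hEigIff, hQIff]
  constructor
  · -- forward direction
    intro E
    have hfeq : ∀ᵐ y ∂(volume : Measure (EuclideanSpace ℝ (Fin d))),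
        f y = (lam + 1) * u y - conv a u y := by
      filter_upwards [E] with y hy
      simp only [hfdef]
      linear_combination hy
    have hP : ∀ n, ∀ᵐ x ∂(volume : Measure (EuclideanSpace ℝ (Fin d))),
        conv (convPow a n) f x
          = (lam + 1) * conv (convPow a n) u x - conv (convPow a (n + 1)) u x := by
      intro n
      induction n with
      | zero =>
        refine Eventually.of_forall fun x => ?_
        calc conv (convPow a 0) f x
            = ∫ y, a (x - y) * ((lam + 1) * u y - conv a u y) := by
              refine integral_congr_ae (hfeq.mono fun y hy => ?_)
              show a (x - y) * f y = a (x - y) * ((lam + 1) * u y - conv a u y)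
              rw [hy]
          _ = ∫ y, ((lam + 1) * (a (x - y) * u y) - a (x - y) * conv a u y) :=
              integral_congr_ae (Eventually.of_forall fun y => by ring)
          _ = (lam + 1) * conv (convPow a 0) u x - conv (convPow a 1) u x := by
              rw [integral_sub ((hKa.integrable_mul_sq hu_m hu_sq x).const_mul _)
                  (hKa.integrable_mul_bdd
                    (show AEStronglyMeasurable (conv a u) volume from measTu 0)
                    (show ∀ y, |conv a u y| ≤ Mu from bndTu 0) x),
                integral_const_mul,
                EigenAux.conv_assoc_ker hKa hKa hu_m hu_sq x]
              rfl
      | succ n ih =>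
        refine Eventually.of_forall fun x => ?_
        calc conv (convPow a (n + 1)) f x
            = ∫ y, a (x - y) * conv (convPow a n) f y :=
              (EigenAux.conv_assoc_ker hKa (hKn n) hf_m hf_sq x).symm
          _ = ∫ y, a (x - y) * ((lam + 1) * conv (convPow a n) u y - conv (convPow a (n + 1)) u y) := by
              refine integral_congr_ae (ih.mono fun y hy => ?_)
              show a (x - y) * conv (convPow a n) f y = _
              rw [hy]
          _ = ∫ y, ((lam + 1) * (a (x - y) * conv (convPow a n) u y)
                - a (x - y) * conv (convPow a (n + 1)) u y) :=
              integral_congr_ae (Eventually.of_forall fun y => by ring)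
          _ = (lam + 1) * conv (convPow a (n + 1)) u x - conv (convPow a (n + 2)) u x := by
              rw [integral_sub ((hKa.integrable_mul_bdd (measTu n) (bndTu n) x).const_mul _)
                  (hKa.integrable_mul_bdd (measTu (n + 1)) (bndTu (n + 1)) x),
                integral_const_mul,
                EigenAux.conv_assoc_ker hKa (hKn n) hu_m hu_sq x,
                EigenAux.conv_assoc_ker hKa (hKn (n + 1)) hu_m hu_sq x]
              rfl
    have hPae : ∀ᵐ x ∂(volume : Measure (EuclideanSpace ℝ (Fin d))), ∀ n,
        conv (convPow a n) f x
          = (lam + 1) * conv (convPow a n) u x - conv (convPow a (n + 1)) u x :=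
      (ae_all_iff).2 hP
    filter_upwards [hPae, E] with x hx hEx
    -- goal : S x = (lam + 1 - V x) * u x
    have hterm : ∀ n, ((lam + 1) ^ (n + 1))⁻¹ * conv (convPow a n) f x
        = ((lam + 1) ^ n)⁻¹ * conv (convPow a n) u x
          - ((lam + 1) ^ (n + 1))⁻¹ * conv (convPow a (n + 1)) u x := by
      intro n
      have hc : ((lam + 1) ^ (n + 1))⁻¹ * (lam + 1) = ((lam + 1) ^ n)⁻¹ := by
        rw [pow_succ, mul_inv, mul_assoc, inv_mul_cancel₀ hqne, mul_one]
      rw [hx n, mul_sub, ← mul_assoc, hc]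
    have hps : ∀ N, ∑ n ∈ Finset.range N, ((lam + 1) ^ (n + 1))⁻¹ * conv (convPow a n) f x
        = conv a u x - ((lam + 1) ^ N)⁻¹ * conv (convPow a N) u x := by
      intro N
      rw [Finset.sum_congr rfl fun n _ => hterm n,
        Finset.sum_range_sub' (fun n => ((lam + 1) ^ n)⁻¹ * conv (convPow a n) u x) N]
      simp only [pow_zero, inv_one, one_mul]
      rfl
    have hlim1 : Tendsto
        (fun N => ∑ n ∈ Finset.range N, ((lam + 1) ^ (n + 1))⁻¹ * conv (convPow a n) f x)
        atTop (𝓝 (S x)) := (hSummf x).hasSum.tendsto_sum_nat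
    have hlim2 : Tendsto (fun N : ℕ => ((lam + 1) ^ N)⁻¹ * conv (convPow a N) u x)
        atTop (𝓝 0) := by
      refine squeeze_zero_norm (a := fun N => Mu * ((lam + 1)⁻¹) ^ N) (fun N => ?_) ?_
      · show ‖((lam + 1) ^ N)⁻¹ * conv (convPow a N) u x‖ ≤ Mu * ((lam + 1)⁻¹) ^ N
        rw [norm_mul, norm_inv, norm_pow, Real.norm_eq_abs, abs_of_pos hq0,
          Real.norm_eq_abs, ← inv_pow]
        calc ((lam + 1)⁻¹) ^ N * |conv (convPow a N) u x|
            ≤ ((lam + 1)⁻¹) ^ N * Mu :=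
              mul_le_mul_of_nonneg_left (bndTu N x) (by positivity)
          _ = Mu * ((lam + 1)⁻¹) ^ N := mul_comm _ _
      · have h := (tendsto_pow_atTop_nhds_zero_of_lt_one hr0 hr1).const_mul Mu
        simpa [mul_comm] using h
    have hlim2' : Tendsto
        (fun N : ℕ => conv a u x - ((lam + 1) ^ N)⁻¹ * conv (convPow a N) u x)
        atTop (𝓝 (conv a u x - 0)) := tendsto_const_nhds.sub hlim2
    have hfin := tendsto_nhds_unique hlim1 (hlim2'.congr fun N => (hps N).symm)
    rw [hfin, sub_zero, hEx]
  · -- backward direction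
    intro hae
    have hintn : ∀ (x : EuclideanSpace ℝ (Fin d)) (n : ℕ), Integrable
        (fun y => a (x - y) * (((lam + 1) ^ (n + 1))⁻¹ * conv (convPow a n) f y)) := by
      intro x n
      refine hKa.integrable_mul_bdd ((measTf n).const_mul _)
        (B := ((lam + 1) ^ (n + 1))⁻¹ * Mf) (fun y => ?_) x
      rw [abs_mul, abs_of_nonneg (hpow0 n)]
      exact mul_le_mul_of_nonneg_left (bndTf n y) (hpow0 n)
    have hstep1 : ∀ x, (∫ y, a (x - y) * S y) = (lam + 1) * S x - conv a f x := by
      intro x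
      have hsum : Summable fun n =>
          ∫ y, ‖a (x - y) * (((lam + 1) ^ (n + 1))⁻¹ * conv (convPow a n) f y)‖ := by
        refine Summable.of_nonneg_of_le (fun n => integral_nonneg fun y => norm_nonneg _)
          (fun n => ?_) hgeo
        have hBn : ∀ y, |((lam + 1) ^ (n + 1))⁻¹ * conv (convPow a n) f y|
            ≤ ((lam + 1) ^ (n + 1))⁻¹ * Mf := fun y => by
          rw [abs_mul, abs_of_nonneg (hpow0 n)]
          exact mul_le_mul_of_nonneg_left (bndTf n y) (hpow0 n)
        calc (∫ y, ‖a (x - y) * (((lam + 1) ^ (n + 1))⁻¹ * conv (convPow a n) f y)‖)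
            ≤ ((lam + 1) ^ (n + 1))⁻¹ * Mf :=
              hKa.norm_integral_mul_bdd_le ((measTf n).const_mul _) hBn x
          _ ≤ ((lam + 1)⁻¹) ^ n * Mf := mul_le_mul_of_nonneg_right (hpow n) hMf0
          _ = Mf * ((lam + 1)⁻¹) ^ n := mul_comm _ _
      have hsummTail : Summable (fun n =>
          ((lam + 1) ^ (n + 1 + 1))⁻¹ * conv (convPow a (n + 1)) f x) :=
        (summable_nat_add_iff 1).2 (hSummf x)
      have e1 : S x = ((lam + 1) ^ (0 + 1))⁻¹ * conv (convPow a 0) f x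
          + ∑' n, ((lam + 1) ^ (n + 1 + 1))⁻¹ * conv (convPow a (n + 1)) f x :=
        Summable.tsum_eq_zero_add (hSummf x)
      calc (∫ y, a (x - y) * S y)
          = ∫ y, ∑' n, a (x - y) * (((lam + 1) ^ (n + 1))⁻¹ * conv (convPow a n) f y) := by
            refine integral_congr_ae (Eventually.of_forall fun y => ?_)
            show a (x - y) * S y = _
            rw [hSdef]
            exact (tsum_mul_left).symm
        _ = ∑' n, ∫ y, a (x - y) * (((lam + 1) ^ (n + 1))⁻¹ * conv (convPow a n) f y) :=
            (integral_tsum_of_summable_integral_norm (hintn x) hsum).symm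
        _ = ∑' n, ((lam + 1) ^ (n + 1))⁻¹ * conv (convPow a (n + 1)) f x := by
            refine tsum_congr fun n => ?_
            have h1 : (fun y => a (x - y) * (((lam + 1) ^ (n + 1))⁻¹ * conv (convPow a n) f y))
                = fun y => ((lam + 1) ^ (n + 1))⁻¹ * (a (x - y) * conv (convPow a n) f y) :=
              funext fun y => by ring
            rw [h1, integral_const_mul, EigenAux.conv_assoc_ker hKa (hKn n) hf_m hf_sq x]
            rfl
        _ = (lam + 1) * S x - conv a f x := by
            have hc : ∀ n : ℕ, (lam + 1) * ((lam + 1) ^ (n + 1 + 1))⁻¹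
                = ((lam + 1) ^ (n + 1))⁻¹ := fun n => by
              rw [pow_succ, mul_inv, mul_comm (((lam + 1) ^ (n + 1))⁻¹) _, ← mul_assoc,
                mul_inv_cancel₀ hqne, one_mul]
            calc ∑' n, ((lam + 1) ^ (n + 1))⁻¹ * conv (convPow a (n + 1)) f x
                = ∑' n, (lam + 1) * (((lam + 1) ^ (n + 1 + 1))⁻¹ * conv (convPow a (n + 1)) f x) := by
                  refine tsum_congr fun n => ?_
                  rw [← mul_assoc, hc n]
              _ = (lam + 1) * ∑' n, ((lam + 1) ^ (n + 1 + 1))⁻¹ * conv (convPow a (n + 1)) f x :=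
                  tsum_mul_left
              _ = (lam + 1) * S x - conv a f x := by
                  rw [e1, mul_add]
                  have h2 : (lam + 1) * (((lam + 1) ^ (0 + 1))⁻¹ * conv (convPow a 0) f x)
                      = conv a f x := by
                    rw [← mul_assoc, zero_add, pow_one, mul_inv_cancel₀ hqne, one_mul]
                    rfl
                  rw [h2]
                  ring
    have hstep2 : ∀ x, (∫ y, a (x - y) * S y) = (lam + 1) * conv a u x - conv a f x := by
      intro x
      calc (∫ y, a (x - y) * S y)
          = ∫ y, a (x - y) * ((lam + 1 - V y) * u y) := by
            refine integral_congr_ae (hae.mono fun y hy => ?_)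
            show a (x - y) * S y = a (x - y) * ((lam + 1 - V y) * u y)
            rw [hy]
        _ = ∫ y, ((lam + 1) * (a (x - y) * u y) - a (x - y) * f y) := by
            refine integral_congr_ae (Eventually.of_forall fun y => ?_)
            show a (x - y) * ((lam + 1 - V y) * u y)
                = (lam + 1) * (a (x - y) * u y) - a (x - y) * f y
            simp only [hfdef]
            ring
        _ = (lam + 1) * conv a u x - conv a f x := by
            rw [integral_sub ((hKa.integrable_mul_sq hu_m hu_sq x).const_mul _)
                (hKa.integrable_mul_sq hf_m hf_sq x), integral_const_mul]
            rfl
    have hSc : ∀ x, S x = conv a u x := by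
      intro x
      have h := (hstep1 x).symm.trans (hstep2 x)
      have h2 : (lam + 1) * S x = (lam + 1) * conv a u x := by linarith
      exact mul_left_cancel₀ hqne h2
    filter_upwards [hae] with x hx
    rw [← hSc x]
    exact hx
end
end

section
/- If ψ ∈ C_b(ℝ^d) satisfies (L₀ + V)ψ = λψ for some λ > 0, then ψ(x) → 0 as |x| → ∞. -/
open MeasureTheory Filter Metric Topology

noncomputable section

/-- If `ψ ∈ C_b(ℝ^d)` satisfies `(L₀ + V)ψ = λψ` for some `λ > 0`, then
`ψ(x) → 0` as `|x| → ∞`. -/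
theorem eigenfunction_Cb_tendsto_zero (d : ℕ) (hd : 1 ≤ d)
    (a : EuclideanSpace ℝ (Fin d) → ℝ)
    (ha_cont : Continuous a) (ha_bdd : ∃ C, ∀ x, |a x| ≤ C)
    (ha_nonneg : ∀ x, 0 ≤ a x) (ha_even : ∀ x, a (-x) = a x)
    (ha_int : Integrable a) (ha_mass : ∫ x, a x = 1)
    (L₀ : BoundedContinuousFunction (EuclideanSpace ℝ (Fin d)) ℝ →L[ℝ]
          BoundedContinuousFunction (EuclideanSpace ℝ (Fin d)) ℝ)
    (hL₀ : ∀ u : BoundedContinuousFunction (EuclideanSpace ℝ (Fin d)) ℝ, ∀ x,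
      L₀ u x = ∫ y, a (x - y) * (u y - u x))
    (V : EuclideanSpace ℝ (Fin d) → ℝ) (hV_cont : Continuous V)
    (hV01 : ∀ x, 0 ≤ V x ∧ V x ≤ 1)
    (hV0 : Tendsto V (cocompact (EuclideanSpace ℝ (Fin d))) (𝓝 0))
    (Vop : BoundedContinuousFunction (EuclideanSpace ℝ (Fin d)) ℝ →L[ℝ]
           BoundedContinuousFunction (EuclideanSpace ℝ (Fin d)) ℝ)
    (hVop : ∀ u : BoundedContinuousFunction (EuclideanSpace ℝ (Fin d)) ℝ, ∀ x,
      Vop u x = V x * u x)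
    (ψ : BoundedContinuousFunction (EuclideanSpace ℝ (Fin d)) ℝ)
    (lam : ℝ) (hlam : 0 < lam) (hψ : (L₀ + Vop) ψ = lam • ψ) :
    Tendsto ψ (cocompact (EuclideanSpace ℝ (Fin d))) (𝓝 0) := by
  haveI : Nonempty (Fin d) := ⟨⟨0, hd⟩⟩
  haveI : Nontrivial (EuclideanSpace ℝ (Fin d)) :=
    ⟨EuclideanSpace.single ⟨0, hd⟩ (1:ℝ), 0, by
      intro h
      have := congrArg (fun v : EuclideanSpace ℝ (Fin d) => v ⟨0, hd⟩) h
      simp [EuclideanSpace.single_apply] at this⟩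
  have hC0 : (0:ℝ) ≤ ‖ψ‖ := norm_nonneg ψ
  have hFb : ∀ x, |ψ x| ≤ ‖ψ‖ := fun x => by
    simpa [Real.norm_eq_abs] using ψ.norm_coe_le_norm x
  have hF0 : ∀ x : EuclideanSpace ℝ (Fin d), (0:ℝ) ≤ |ψ x| := fun x => abs_nonneg _
  have hbdd : IsBoundedUnder (· ≤ ·) (cocompact (EuclideanSpace ℝ (Fin d)))
      (fun x => |ψ x|) := isBoundedUnder_of ⟨‖ψ‖, hFb⟩
  have hbdd' : IsBoundedUnder (· ≥ ·) (cocompact (EuclideanSpace ℝ (Fin d)))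
      (fun x => |ψ x|) := isBoundedUnder_of ⟨0, hF0⟩
  have hcobdd : IsCoboundedUnder (· ≤ ·) (cocompact (EuclideanSpace ℝ (Fin d)))
      (fun x => |ψ x|) := hbdd'.isCoboundedUnder_flip
  have hcobdd' : IsCoboundedUnder (· ≥ ·) (cocompact (EuclideanSpace ℝ (Fin d)))
      (fun x => |ψ x|) := hbdd.isCoboundedUnder_flip
  set m : ℝ := limsup (fun x => |ψ x|) (cocompact (EuclideanSpace ℝ (Fin d))) with hmdef
  have hm0 : 0 ≤ m :=
    le_limsup_of_frequently_le ((Eventually.of_forall hF0).frequently) hbdd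
  -- integrability facts
  have hax : ∀ x : EuclideanSpace ℝ (Fin d), Integrable (fun y => a (x - y)) := fun x =>
    ((Measure.measurePreserving_sub_left volume x).integrable_comp ha_int.1).mpr ha_int
  have haψ : ∀ x : EuclideanSpace ℝ (Fin d), Integrable (fun y => a (x - y) * ψ y) := by
    intro x
    have := (hax x).bdd_mul (f := fun y => (ψ y : ℝ))
      ψ.continuous.aestronglyMeasurable (Eventually.of_forall fun y => ψ.norm_coe_le_norm y)
    simpa [mul_comm] using this
  have haF : ∀ x : EuclideanSpace ℝ (Fin d), Integrable (fun y => a (x - y) * |ψ y|) := by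
    intro x
    have := (hax x).bdd_mul (f := fun y => |ψ y|)
      (ψ.continuous.abs.aestronglyMeasurable)
      (Eventually.of_forall fun y => (by rw [Real.norm_eq_abs, abs_abs]; exact hFb y : ‖|ψ y|‖ ≤ ‖ψ‖))
    simpa [mul_comm] using this
  have hmass_x : ∀ x : EuclideanSpace ℝ (Fin d), ∫ y, a (x - y) = 1 := fun x => by
    rw [integral_sub_left_eq_self a volume x]; exact ha_mass
  -- pointwise eigen equation
  have key : ∀ x, (lam + 1 - V x) * ψ x = ∫ y, a (x - y) * ψ y := by
    intro x
    have h1 : L₀ ψ x + V x * ψ x = lam * ψ x := by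
      have h := congrArg (fun u : BoundedContinuousFunction (EuclideanSpace ℝ (Fin d)) ℝ => u x) hψ
      simpa [ContinuousLinearMap.add_apply, hVop] using h
    have h2 : L₀ ψ x = (∫ y, a (x - y) * ψ y) - ψ x := by
      rw [hL₀]
      have heq : (fun y => a (x - y) * (ψ y - ψ x)) =
          fun y => a (x - y) * ψ y - a (x - y) * ψ x := by
        funext y; ring
      rw [heq, integral_sub (haψ x) ((hax x).mul_const _), integral_mul_const,
        hmass_x x, one_mul]
    linear_combination h2 - h1
  have hVle : ∀ x, (0:ℝ) < lam + 1 - V x := fun x => by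
    have := (hV01 x).2; linarith
  have keyabs : ∀ x, (lam + 1 - V x) * |ψ x| ≤ ∫ y, a (x - y) * |ψ y| := by
    intro x
    have h2 : (lam + 1 - V x) * |ψ x| = |∫ y, a (x - y) * ψ y| := by
      rw [← key x, abs_mul, abs_of_pos (hVle x)]
    rw [h2]
    calc |∫ y, a (x - y) * ψ y| ≤ ∫ y, |a (x - y)| * |ψ y| := by
          simpa [Real.norm_eq_abs, abs_mul] using
            norm_integral_le_integral_norm (μ := volume) (fun y => a (x - y) * ψ y)
      _ = ∫ y, a (x - y) * |ψ y| := by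
          congr 1; funext y
          rw [abs_of_nonneg (ha_nonneg _)]
  -- main estimate
  have main : ∀ ε : ℝ, 0 < ε → ε < 1 → m * lam ≤ ε * (1 + ‖ψ‖ + m) := by
    intro ε hε hε1
    -- choose tail radius
    obtain ⟨R, hR0, hRtail⟩ : ∃ R : ℝ, 0 ≤ R ∧
        ∫ z in (closedBall (0:EuclideanSpace ℝ (Fin d)) R)ᶜ, a z < ε := by
      have hanti : Antitone (fun n : ℕ => (closedBall (0:EuclideanSpace ℝ (Fin d)) (n:ℝ))ᶜ) := by
        intro i j hij
        exact Set.compl_subset_compl.mpr (closedBall_subset_closedBall (by exact_mod_cast hij))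
      have hmeas : ∀ n : ℕ, MeasurableSet ((closedBall (0:EuclideanSpace ℝ (Fin d)) (n:ℝ))ᶜ) :=
        fun n => (measurableSet_closedBall).compl
      have hiInt : ⋂ n : ℕ, (closedBall (0:EuclideanSpace ℝ (Fin d)) (n:ℝ))ᶜ = ∅ := by
        ext z
        simp only [Set.mem_iInter, Set.mem_compl_iff, mem_closedBall, dist_zero_right,
          Set.mem_empty_iff_false, iff_false, not_forall, not_not]
        obtain ⟨n, hn⟩ := exists_nat_ge ‖z‖
        exact ⟨n, hn⟩
      have htt := tendsto_setIntegral_of_antitone hmeas hanti ⟨0, ha_int.integrableOn⟩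
      rw [hiInt] at htt
      simp only [setIntegral_empty] at htt
      obtain ⟨n, hn⟩ := (htt.eventually (eventually_lt_nhds hε)).exists
      exact ⟨n, Nat.cast_nonneg n, hn⟩
    have hg_int : Integrable (((closedBall (0:EuclideanSpace ℝ (Fin d)) R)ᶜ).indicator a) :=
      ha_int.indicator (measurableSet_closedBall).compl
    set g : EuclideanSpace ℝ (Fin d) → ℝ :=
      ((closedBall (0:EuclideanSpace ℝ (Fin d)) R)ᶜ).indicator a with hgdef
    have hg_nonneg : ∀ z, 0 ≤ g z := fun z =>
      Set.indicator_nonneg (fun z _ => ha_nonneg z) z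
    have hg_tail : ∫ z, g z < ε := by
      rw [hgdef, integral_indicator (measurableSet_closedBall).compl]
      exact hRtail
    have hgx : ∀ x : EuclideanSpace ℝ (Fin d), Integrable (fun y => g (x - y)) := fun x =>
      ((Measure.measurePreserving_sub_left volume x).integrable_comp hg_int.1).mpr hg_int
    have hgx_int : ∀ x : EuclideanSpace ℝ (Fin d), ∫ y, g (x - y) = ∫ z, g z := fun x =>
      integral_sub_left_eq_self g volume x
    -- eventual smallness region
    have hE1 : ∀ᶠ x in cocompact (EuclideanSpace ℝ (Fin d)), |ψ x| < m + ε := by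
      apply eventually_lt_of_limsup_lt _ hbdd
      rw [← hmdef]; linarith
    rw [eventually_iff, mem_cocompact] at hE1
    obtain ⟨K, hKc, hKsub⟩ := hE1
    have hK'c : IsCompact (cthickening R K) := hKc.cthickening
    have hEnotK' : ∀ᶠ x in cocompact (EuclideanSpace ℝ (Fin d)), x ∉ cthickening R K := by
      rw [eventually_iff, mem_cocompact]
      exact ⟨cthickening R K, hK'c, fun x hx => hx⟩
    have hEV : ∀ᶠ x in cocompact (EuclideanSpace ℝ (Fin d)), V x < ε :=
      hV0.eventually (eventually_lt_nhds hε)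
    -- the bound
    have hbound : ∀ᶠ x in cocompact (EuclideanSpace ℝ (Fin d)),
        |ψ x| ≤ (m + ε + ‖ψ‖ * ε) / (lam + 1 - ε) := by
      filter_upwards [hEnotK', hEV] with x hxK hxV
      have hpt : ∀ y, a (x - y) * |ψ y| ≤ a (x - y) * (m + ε) + ‖ψ‖ * g (x - y) := by
        intro y
        by_cases hy : y ∈ K
        · have hdist : R < dist x y := by
            by_contra h
            push_neg at h
            exact hxK (mem_cthickening_of_dist_le x y R K hy h)
          have hgval : g (x - y) = a (x - y) := by
            rw [hgdef, Set.indicator_of_mem]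
            simp only [Set.mem_compl_iff, mem_closedBall, dist_zero_right]
            rw [← dist_eq_norm]
            linarith
          rw [hgval]
          have := hFb y
          nlinarith [ha_nonneg (x - y), hF0 y, hm0, hε.le]
        · have hyK : |ψ y| ≤ m + ε := le_of_lt (hKsub (Set.mem_compl hy))
          have h1 : a (x - y) * |ψ y| ≤ a (x - y) * (m + ε) :=
            mul_le_mul_of_nonneg_left hyK (ha_nonneg _)
          have h2 : (0:ℝ) ≤ ‖ψ‖ * g (x - y) := mul_nonneg hC0 (hg_nonneg _)
          linarith
      have hint : ∫ y, a (x - y) * |ψ y| ≤ m + ε + ‖ψ‖ * ε := by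
        calc ∫ y, a (x - y) * |ψ y|
            ≤ ∫ y, (a (x - y) * (m + ε) + ‖ψ‖ * g (x - y)) := by
              apply integral_mono (haF x) _ hpt
              exact ((hax x).mul_const _).add ((hgx x).const_mul _)
          _ = (m + ε) + ‖ψ‖ * ∫ z, g z := by
              rw [integral_add ((hax x).mul_const _) ((hgx x).const_mul _),
                integral_mul_const, hmass_x x, one_mul, integral_const_mul, hgx_int x]
          _ ≤ m + ε + ‖ψ‖ * ε := by
              have := mul_le_mul_of_nonneg_left hg_tail.le hC0
              linarith
      have hlow : (lam + 1 - ε) * |ψ x| ≤ (lam + 1 - V x) * |ψ x| := by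
        apply mul_le_mul_of_nonneg_right _ (hF0 x)
        linarith
      have hden : (0:ℝ) < lam + 1 - ε := by linarith
      rw [le_div_iff₀ hden]
      calc |ψ x| * (lam + 1 - ε) = (lam + 1 - ε) * |ψ x| := by ring
        _ ≤ (lam + 1 - V x) * |ψ x| := hlow
        _ ≤ ∫ y, a (x - y) * |ψ y| := keyabs x
        _ ≤ m + ε + ‖ψ‖ * ε := hint
    have hmle : m ≤ (m + ε + ‖ψ‖ * ε) / (lam + 1 - ε) :=
      limsup_le_of_le hcobdd hbound
    have hden : (0:ℝ) < lam + 1 - ε := by linarith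
    rw [le_div_iff₀ hden] at hmle
    nlinarith
  -- conclude m ≤ 0
  have hm_le : m ≤ 0 := by
    by_contra h
    push_neg at h
    have h1Cm : (0:ℝ) < 1 + ‖ψ‖ + m := by linarith
    have hmlam : 0 < m * lam := mul_pos h hlam
    set ε : ℝ := min (1/2) (m * lam / (2 * (1 + ‖ψ‖ + m))) with hεdef
    have hε : 0 < ε := lt_min (by norm_num) (by positivity)
    have hε1 : ε < 1 := lt_of_le_of_lt (min_le_left _ _) (by norm_num)
    have hmain := main ε hε hε1
    have h2 : ε * (1 + ‖ψ‖ + m) ≤ m * lam / 2 := by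
      have h3 : ε ≤ m * lam / (2 * (1 + ‖ψ‖ + m)) := min_le_right _ _
      calc ε * (1 + ‖ψ‖ + m) ≤ (m * lam / (2 * (1 + ‖ψ‖ + m))) * (1 + ‖ψ‖ + m) :=
            mul_le_mul_of_nonneg_right h3 h1Cm.le
        _ = m * lam / 2 := by field_simp
    linarith
  have hm_eq : m = 0 := le_antisymm hm_le hm0
  have habs : Tendsto (fun x => |ψ x|) (cocompact (EuclideanSpace ℝ (Fin d))) (𝓝 0) := by
    apply tendsto_of_le_liminf_of_limsup_le
    · exact le_liminf_of_le hcobdd' (Eventually.of_forall hF0)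
    · rw [← hmdef, hm_eq]
    · exact hbdd
    · exact hbdd'
  exact (tendsto_zero_iff_abs_tendsto_zero _).mpr habs
end
end

section
/- For every R > 0, writing χ_{B_R} for the indicator function of the ball B_R = {x : |x| < R}, one has 0 ≤ −⟨L₀χ_{B_R}, χ_{B_R}⟩_{L²} ≤ vol(B_R) · ∫_{ℝ^d} a(z) (1 − ((1 − |z|/R)₊)^d) dz; consequently (1/vol(B_R)) ⟨L₀χ_{B_R}, χ_{B_R}⟩_{L²} → 0 as R → ∞. -/
open MeasureTheory Filter Metric Topology

noncomputable section

namespace QFIBaux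

abbrev Esp (d : ℕ) := EuclideanSpace ℝ (Fin d)

variable {d : ℕ}

def indb (d : ℕ) (R : ℝ) : Esp d → ℝ := (Metric.ball (0 : Esp d) R).indicator fun _ => 1

lemma indb_nonneg (R : ℝ) (x : Esp d) : 0 ≤ indb d R x :=
  Set.indicator_nonneg (fun _ _ => zero_le_one) x

lemma indb_le_one (R : ℝ) (x : Esp d) : indb d R x ≤ 1 := by
  unfold indb; by_cases h : x ∈ ball (0:Esp d) R <;> simp [Set.indicator_apply, h]

lemma indb_meas (R : ℝ) : Measurable (indb d R) :=
  measurable_const.indicator measurableSet_ball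

lemma indb_integrable (R : ℝ) : Integrable (indb d R) volume := by
  unfold indb
  rw [integrable_indicator_iff measurableSet_ball]
  exact integrableOn_const measure_ball_lt_top.ne

lemma indb_mem (R : ℝ) {x : Esp d} (hx : x ∈ ball (0:Esp d) R) : indb d R x = 1 := by
  simp [indb, Set.indicator_apply, hx]

variable {a : Esp d → ℝ}

/-- The "overlap" function: `h z = ∫ x, 1_{B_R}(x) 1_{B_R}(x-z) dx`. -/
def ovl (d : ℕ) (R : ℝ) (z : Esp d) : ℝ := ∫ x, indb d R x * indb d R (x - z)

lemma ovl_aesm (R : ℝ) : AEStronglyMeasurable (fun z => ovl d R z) volume := by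
  have hF : AEStronglyMeasurable
      (fun p : Esp d × Esp d => indb d R p.2 * indb d R (p.2 - p.1))
      ((volume : Measure (Esp d)).prod volume) :=
    (((indb_meas R).comp measurable_snd).mul
      ((indb_meas R).comp (measurable_snd.sub measurable_fst))).aestronglyMeasurable
  exact hF.integral_prod_right'

lemma ovl_nonneg (R : ℝ) (z : Esp d) : 0 ≤ ovl d R z :=
  integral_nonneg fun x => mul_nonneg (indb_nonneg R x) (indb_nonneg R _)

lemma ovl_integrand_integrable (R : ℝ) (z : Esp d) :
    Integrable (fun x => indb d R x * indb d R (x - z)) volume := by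
  refine (indb_integrable R).mono ?_ ?_
  · exact ((indb_meas R).aestronglyMeasurable).mul
      (((indb_meas R).comp (measurable_id.sub measurable_const)).aestronglyMeasurable)
  · refine Filter.Eventually.of_forall fun x => ?_
    rw [Real.norm_eq_abs, Real.norm_eq_abs, abs_of_nonneg (indb_nonneg R x),
      abs_of_nonneg (mul_nonneg (indb_nonneg R x) (indb_nonneg R _))]
    exact mul_le_of_le_one_right (indb_nonneg R x) (indb_le_one R _)

lemma ovl_le (R : ℝ) (z : Esp d) :
    ovl d R z ≤ (volume (ball (0 : Esp d) R)).toReal := by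
  have h1 : ∫ x, indb d R x = (volume (ball (0 : Esp d) R)).toReal := by
    unfold indb
    rw [integral_indicator measurableSet_ball, setIntegral_const, smul_eq_mul, mul_one]; rfl
  rw [← h1]
  refine integral_mono (ovl_integrand_integrable R z) (indb_integrable R) fun x => ?_
  exact mul_le_of_le_one_right (indb_nonneg R x) (indb_le_one R _)

lemma ovl_ge (hd : 1 ≤ d) {R : ℝ} (hR : 0 < R) (z : Esp d) :
    (volume (ball (0 : Esp d) R)).toReal * (max (1 - ‖z‖ / R) 0) ^ d ≤ ovl d R z := by
  have hne : Nonempty (Fin d) := ⟨⟨0, hd⟩⟩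
  haveI : Nontrivial (Esp d) := inferInstance
  by_cases hz : ‖z‖ < R
  · have hr : 0 < R - ‖z‖ := by linarith
    have hmax : max (1 - ‖z‖ / R) 0 = 1 - ‖z‖ / R := by
      rw [max_eq_left]
      have : ‖z‖ / R < 1 := (div_lt_one hR).2 hz
      linarith
    have hpt : ∀ x : Esp d, (ball z (R - ‖z‖)).indicator (fun _ => (1:ℝ)) x
        ≤ indb d R x * indb d R (x - z) := by
      intro x
      by_cases hx : x ∈ ball z (R - ‖z‖)
      · have hxz : ‖x - z‖ < R - ‖z‖ := mem_ball_iff_norm.1 hx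
        have h1 : x ∈ ball (0 : Esp d) R := by
          rw [mem_ball_zero_iff]
          calc ‖x‖ ≤ ‖z‖ + ‖x - z‖ := norm_le_insert' x z
            _ < R := by linarith
        have h2 : x - z ∈ ball (0 : Esp d) R := by
          rw [mem_ball_zero_iff]; linarith [norm_nonneg z]
        rw [Set.indicator_of_mem hx, indb_mem R h1, indb_mem R h2]; norm_num
      · rw [Set.indicator_of_notMem hx]
        exact mul_nonneg (indb_nonneg R x) (indb_nonneg R _)
    have hint : Integrable ((ball z (R - ‖z‖)).indicator fun _ => (1:ℝ)) volume := by
      rw [integrable_indicator_iff measurableSet_ball]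
      exact integrableOn_const measure_ball_lt_top.ne
    have hmono : ∫ x, (ball z (R - ‖z‖)).indicator (fun _ => (1:ℝ)) x ≤ ovl d R z :=
      integral_mono hint (ovl_integrand_integrable R z) hpt
    have hsmall : ∫ x, (ball z (R - ‖z‖)).indicator (fun _ => (1:ℝ)) x
        = (volume (ball z (R - ‖z‖))).toReal := by
      rw [integral_indicator measurableSet_ball, setIntegral_const, smul_eq_mul, mul_one]; rfl
    have hvr : (volume (ball z (R - ‖z‖))).toReal
        = (R - ‖z‖) ^ d * (volume (ball (0 : Esp d) 1)).toReal := by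
      rw [Measure.addHaar_ball volume z hr.le, finrank_euclideanSpace_fin,
        ENNReal.toReal_mul, ENNReal.toReal_ofReal (pow_nonneg hr.le d)]
    have hvR : (volume (ball (0 : Esp d) R)).toReal
        = R ^ d * (volume (ball (0 : Esp d) 1)).toReal := by
      rw [Measure.addHaar_ball volume 0 hR.le, finrank_euclideanSpace_fin,
        ENNReal.toReal_mul, ENNReal.toReal_ofReal (pow_nonneg hR.le d)]
    have hRz : R * (1 - ‖z‖ / R) = R - ‖z‖ := by field_simp
    have key : (volume (ball (0 : Esp d) R)).toReal * (max (1 - ‖z‖ / R) 0) ^ d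
        = (volume (ball z (R - ‖z‖))).toReal := by
      rw [hmax, hvr, hvR]
      calc R ^ d * (volume (ball (0 : Esp d) 1)).toReal * (1 - ‖z‖ / R) ^ d
          = (R * (1 - ‖z‖ / R)) ^ d * (volume (ball (0 : Esp d) 1)).toReal := by
            rw [mul_pow]; ring
        _ = (R - ‖z‖) ^ d * (volume (ball (0 : Esp d) 1)).toReal := by rw [hRz]
    rw [key, ← hsmall]; exact hmono
  · have hmax : max (1 - ‖z‖ / R) 0 = 0 := by
      rw [max_eq_right]
      have : 1 ≤ ‖z‖ / R := (one_le_div hR).2 (not_lt.1 hz)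
      linarith
    rw [hmax, zero_pow (by omega : d ≠ 0), mul_zero]
    exact ovl_nonneg R z


lemma inner_value (ha_cont : Continuous a) (ha_nonneg : ∀ x, 0 ≤ a x)
    (ha_int : Integrable a) (ha_mass : ∫ x, a x = 1) (R : ℝ) :
    ∫ x, (∫ y, a (x - y) * (indb d R y - indb d R x)) * indb d R x
      = (∫ z, a z * ovl d R z) - (volume (ball (0 : Esp d) R)).toReal := by
  set g : Esp d → ℝ := fun x => ∫ y, a (x - y) * indb d R y with hg
  have haxint : ∀ x : Esp d, Integrable (fun y => a (x - y)) volume :=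
    fun x => ha_int.comp_sub_left x
  have haxind : ∀ x : Esp d, Integrable (fun y => a (x - y) * indb d R y) volume := by
    intro x
    refine (haxint x).mono (((ha_cont.comp
      (continuous_const.sub continuous_id)).aestronglyMeasurable).mul
      (indb_meas R).aestronglyMeasurable) (Filter.Eventually.of_forall fun y => ?_)
    rw [Real.norm_eq_abs, Real.norm_eq_abs, abs_mul]
    exact mul_le_of_le_one_right (abs_nonneg _)
      (by rw [abs_of_nonneg (indb_nonneg R y)]; exact indb_le_one R y)
  have hone : ∀ x : Esp d, ∫ y, a (x - y) = 1 := fun x => by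
    rw [integral_sub_left_eq_self a volume x]; exact ha_mass
  have hpt : ∀ x : Esp d, (∫ y, a (x - y) * (indb d R y - indb d R x)) * indb d R x
      = (ball (0 : Esp d) R).indicator (fun x => g x - 1) x := by
    intro x
    by_cases hx : x ∈ ball (0 : Esp d) R
    · rw [Set.indicator_of_mem hx, indb_mem R hx, mul_one]
      calc ∫ y, a (x - y) * (indb d R y - 1)
          = ∫ y, (a (x - y) * indb d R y - a (x - y)) := by
            congr 1; funext y; ring
        _ = (∫ y, a (x - y) * indb d R y) - ∫ y, a (x - y) :=
            integral_sub (haxind x) (haxint x)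
        _ = g x - 1 := by rw [hone x]
    · have h0 : indb d R x = 0 := Set.indicator_of_notMem hx _
      rw [Set.indicator_of_notMem hx, h0, mul_zero]
  have hgm : AEStronglyMeasurable g volume := by
    have : AEStronglyMeasurable
        (fun p : Esp d × Esp d => a (p.1 - p.2) * indb d R p.2)
        ((volume : Measure (Esp d)).prod volume) :=
      ((ha_cont.measurable.comp (measurable_fst.sub measurable_snd)).mul
        ((indb_meas R).comp measurable_snd)).aestronglyMeasurable
    exact this.integral_prod_right'
  have hg0 : ∀ x, 0 ≤ g x := fun x =>
    integral_nonneg fun y => mul_nonneg (ha_nonneg _) (indb_nonneg R y)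
  have hg1 : ∀ x, g x ≤ 1 := fun x => by
    rw [← hone x]
    exact integral_mono (haxind x) (haxint x) fun y =>
      mul_le_of_le_one_right (ha_nonneg _) (indb_le_one R y)
  have hconst : Integrable (fun _ : Esp d => (1:ℝ))
      (volume.restrict (ball (0 : Esp d) R)) :=
    integrableOn_const measure_ball_lt_top.ne
  have hgint : IntegrableOn g (ball (0 : Esp d) R) volume := by
    refine hconst.mono' hgm.restrict (Filter.Eventually.of_forall fun x => ?_)
    rw [Real.norm_eq_abs, abs_of_nonneg (hg0 x)]; exact hg1 x
  have step1 : ∫ x, (∫ y, a (x - y) * (indb d R y - indb d R x)) * indb d R x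
      = ∫ x in ball (0 : Esp d) R, (g x - 1) := by
    rw [← integral_indicator measurableSet_ball]
    exact integral_congr_ae (Filter.Eventually.of_forall hpt)
  have step2 : ∫ x in ball (0 : Esp d) R, (g x - 1)
      = (∫ x in ball (0 : Esp d) R, g x) - (volume (ball (0 : Esp d) R)).toReal := by
    rw [integral_sub hgint hconst, setIntegral_const, smul_eq_mul, mul_one]; rfl
  -- now compute ∫ x in ball, g x
  have hGint : Integrable
      (fun p : Esp d × Esp d => indb d R p.1 * (a p.2 * indb d R (p.1 - p.2)))
      ((volume : Measure (Esp d)).prod volume) := by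
    have hbound : Integrable (fun p : Esp d × Esp d => indb d R p.1 * a p.2)
        ((volume : Measure (Esp d)).prod volume) :=
      (indb_integrable R).mul_prod ha_int
    refine hbound.mono (((indb_meas R).comp measurable_fst).mul
      ((ha_cont.measurable.comp measurable_snd).mul
        ((indb_meas R).comp (measurable_fst.sub measurable_snd)))).aestronglyMeasurable
      (Filter.Eventually.of_forall fun p => ?_)
    rw [Real.norm_eq_abs, Real.norm_eq_abs,
      abs_of_nonneg (mul_nonneg (indb_nonneg R _) (mul_nonneg (ha_nonneg _) (indb_nonneg R _))),
      abs_of_nonneg (mul_nonneg (indb_nonneg R _) (ha_nonneg _))]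
    exact mul_le_mul_of_nonneg_left
      (mul_le_of_le_one_right (ha_nonneg _) (indb_le_one R _)) (indb_nonneg R _)
  have step3 : ∫ x in ball (0 : Esp d) R, g x = ∫ z, a z * ovl d R z := by
    have e1 : ∫ x in ball (0 : Esp d) R, g x = ∫ x, indb d R x * g x := by
      rw [← integral_indicator measurableSet_ball]
      congr 1; funext x
      by_cases hx : x ∈ ball (0 : Esp d) R
      · rw [Set.indicator_of_mem hx, indb_mem R hx, one_mul]
      · rw [Set.indicator_of_notMem hx,
          show indb d R x = 0 from Set.indicator_of_notMem hx _, zero_mul]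
    have e2 : ∀ x : Esp d, indb d R x * g x
        = ∫ z, indb d R x * (a z * indb d R (x - z)) := by
      intro x
      have hsub := integral_sub_left_eq_self
        (fun z => indb d R x * (a z * indb d R (x - z))) volume x
      simp only [sub_sub_cancel] at hsub
      rw [hg]
      rw [← hsub, ← integral_const_mul _ _]
    have e3 : ∫ x, ∫ z, indb d R x * (a z * indb d R (x - z))
        = ∫ z, ∫ x, indb d R x * (a z * indb d R (x - z)) :=
      integral_integral_swap hGint
    have e4 : ∀ z : Esp d, ∫ x, indb d R x * (a z * indb d R (x - z))
        = a z * ovl d R z := by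
      intro z
      rw [ovl, ← integral_const_mul _ _]
      congr 1; funext x; ring
    rw [e1]
    calc ∫ x, indb d R x * g x
        = ∫ x, ∫ z, indb d R x * (a z * indb d R (x - z)) := by
          exact integral_congr_ae (Filter.Eventually.of_forall e2)
      _ = ∫ z, ∫ x, indb d R x * (a z * indb d R (x - z)) := e3
      _ = ∫ z, a z * ovl d R z := integral_congr_ae (Filter.Eventually.of_forall e4)
  rw [step1, step2, step3]

end QFIBaux

open QFIBaux

/-- For the indicator `χ_{B_R}` of the ball `B_R = {|x| < R}`,
`0 ≤ −⟨L₀χ_{B_R}, χ_{B_R}⟩ ≤ vol(B_R) ∫ a(z)(1 − ((1 − |z|/R)₊)^d) dz`, and consequently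
`vol(B_R)⁻¹ ⟨L₀χ_{B_R}, χ_{B_R}⟩ → 0` as `R → ∞`. -/
theorem quadratic_form_indicator_ball (d : ℕ) (hd : 1 ≤ d)
    (a : EuclideanSpace ℝ (Fin d) → ℝ)
    (ha_cont : Continuous a) (ha_bdd : ∃ C, ∀ x, |a x| ≤ C)
    (ha_nonneg : ∀ x, 0 ≤ a x) (ha_even : ∀ x, a (-x) = a x)
    (ha_int : Integrable a) (ha_mass : ∫ x, a x = 1)
    (L₀ : Lp ℝ 2 (volume : Measure (EuclideanSpace ℝ (Fin d))) →L[ℝ]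
          Lp ℝ 2 (volume : Measure (EuclideanSpace ℝ (Fin d))))
    (hL₀ : ∀ u : Lp ℝ 2 (volume : Measure (EuclideanSpace ℝ (Fin d))),
      (L₀ u : EuclideanSpace ℝ (Fin d) → ℝ) =ᵐ[volume] fun x => ∫ y, a (x - y) * (u y - u x))
    (χ : ℝ → Lp ℝ 2 (volume : Measure (EuclideanSpace ℝ (Fin d))))
    (hχ : ∀ R : ℝ, (χ R : EuclideanSpace ℝ (Fin d) → ℝ) =ᵐ[volume]
      (Metric.ball (0 : EuclideanSpace ℝ (Fin d)) R).indicator fun _ => (1 : ℝ)) :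
    (∀ R : ℝ, 0 < R →
      0 ≤ -(inner ℝ (L₀ (χ R)) (χ R) : ℝ) ∧
      -(inner ℝ (L₀ (χ R)) (χ R) : ℝ) ≤
        (volume (Metric.ball (0 : EuclideanSpace ℝ (Fin d)) R)).toReal *
          ∫ z, a z * (1 - (max (1 - ‖z‖ / R) 0) ^ d)) ∧
    Tendsto
      (fun R : ℝ =>
        ((volume (Metric.ball (0 : EuclideanSpace ℝ (Fin d)) R)).toReal)⁻¹ *
          (inner ℝ (L₀ (χ R)) (χ R) : ℝ))
      atTop (𝓝 0) := by

  haveI : Nonempty (Fin d) := ⟨⟨0, hd⟩⟩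
  set V : ℝ → ℝ := fun R => (volume (ball (0 : Esp d) R)).toReal with hVdef
  -- the inner product identity
  have hinner : ∀ R : ℝ, (inner ℝ (L₀ (χ R)) (χ R) : ℝ)
      = (∫ z, a z * ovl d R z) - V R := by
    intro R
    have h1 : ∀ᵐ x ∂(volume : Measure (Esp d)),
        (inner ℝ ((L₀ (χ R) : Esp d → ℝ) x) ((χ R : Esp d → ℝ) x) : ℝ)
        = (∫ y, a (x - y) * (indb d R y - indb d R x)) * indb d R x := by
      filter_upwards [hL₀ (χ R), hχ R] with x hx1 hx2
      have hx2' : (χ R : Esp d → ℝ) x = indb d R x := hx2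
      rw [RCLike.inner_apply', conj_trivial, hx1, hx2']
      congr 1
      apply integral_congr_ae
      filter_upwards [hχ R] with y hy
      have hy' : (χ R : Esp d → ℝ) y = indb d R y := hy
      rw [hy']
    calc (inner ℝ (L₀ (χ R)) (χ R) : ℝ)
        = ∫ x, (inner ℝ ((L₀ (χ R) : Esp d → ℝ) x) ((χ R : Esp d → ℝ) x) : ℝ) :=
          L2.inner_def (L₀ (χ R)) (χ R)
      _ = ∫ x, (∫ y, a (x - y) * (indb d R y - indb d R x)) * indb d R x :=
          integral_congr_ae h1
      _ = (∫ z, a z * ovl d R z) - V R :=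
          inner_value ha_cont ha_nonneg ha_int ha_mass R
  -- bounds for each R > 0
  have hb : ∀ R : ℝ, 0 < R →
      0 ≤ -(inner ℝ (L₀ (χ R)) (χ R) : ℝ) ∧
      -(inner ℝ (L₀ (χ R)) (χ R) : ℝ) ≤
        V R * ∫ z, a z * (1 - (max (1 - ‖z‖ / R) 0) ^ d) := by
    intro R hR
    have hjint : Integrable (fun z => a z * ovl d R z) volume := by
      refine (ha_int.const_mul (V R)).mono'
        (ha_cont.aestronglyMeasurable.mul (ovl_aesm R))
        (Filter.Eventually.of_forall fun z => ?_)
      rw [Real.norm_eq_abs, abs_of_nonneg (mul_nonneg (ha_nonneg z) (ovl_nonneg R z))]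
      calc a z * ovl d R z ≤ a z * V R :=
            mul_le_mul_of_nonneg_left (ovl_le R z) (ha_nonneg z)
        _ = V R * a z := mul_comm _ _
    have hJ_le : (∫ z, a z * ovl d R z) ≤ V R := by
      have h := integral_mono hjint (ha_int.mul_const (V R)) fun z =>
        mul_le_mul_of_nonneg_left (ovl_le R z) (ha_nonneg z)
      rwa [integral_mul_const, ha_mass, one_mul] at h
    have hJ0 : 0 ≤ ∫ z, a z * ovl d R z :=
      integral_nonneg fun z => mul_nonneg (ha_nonneg z) (ovl_nonneg R z)
    have hm0 : ∀ z : Esp d, 0 ≤ (max (1 - ‖z‖ / R) 0) ^ d :=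
      fun z => pow_nonneg (le_max_right _ _) d
    have hm1 : ∀ z : Esp d, (max (1 - ‖z‖ / R) 0) ^ d ≤ 1 := by
      intro z
      refine pow_le_one₀ (le_max_right _ _) (max_le ?_ zero_le_one)
      have : 0 ≤ ‖z‖ / R := div_nonneg (norm_nonneg z) hR.le
      linarith
    have hmcont : Continuous fun z : Esp d => (max (1 - ‖z‖ / R) 0) ^ d :=
      (((continuous_const.sub (continuous_norm.div_const R)).max continuous_const).pow d)
    have hmint : Integrable (fun z => a z * (max (1 - ‖z‖ / R) 0) ^ d) volume := by
      refine ha_int.mono' (ha_cont.aestronglyMeasurable.mul hmcont.aestronglyMeasurable)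
        (Filter.Eventually.of_forall fun z => ?_)
      rw [Real.norm_eq_abs, abs_of_nonneg (mul_nonneg (ha_nonneg z) (hm0 z))]
      exact mul_le_of_le_one_right (ha_nonneg z) (hm1 z)
    have hsplit : ∫ z, a z * (1 - (max (1 - ‖z‖ / R) 0) ^ d)
        = 1 - ∫ z, a z * (max (1 - ‖z‖ / R) 0) ^ d := by
      have e : (fun z : Esp d => a z * (1 - (max (1 - ‖z‖ / R) 0) ^ d))
          = fun z => a z - a z * (max (1 - ‖z‖ / R) 0) ^ d := by
        funext z; ring
      rw [e, integral_sub ha_int hmint, ha_mass]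
    have hlow : V R * (∫ z, a z * (max (1 - ‖z‖ / R) 0) ^ d)
        ≤ ∫ z, a z * ovl d R z := by
      rw [← integral_const_mul _ _]
      refine integral_mono (hmint.const_mul _) hjint fun z => ?_
      calc V R * (a z * (max (1 - ‖z‖ / R) 0) ^ d)
          = a z * (V R * (max (1 - ‖z‖ / R) 0) ^ d) := by ring
        _ ≤ a z * ovl d R z :=
            mul_le_mul_of_nonneg_left (ovl_ge hd hR z) (ha_nonneg z)
    constructor
    · rw [hinner R]; linarith
    · rw [hinner R, hsplit]
      have expand : V R * (1 - ∫ z, a z * (max (1 - ‖z‖ / R) 0) ^ d)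
          = V R - V R * ∫ z, a z * (max (1 - ‖z‖ / R) 0) ^ d := by ring
      rw [expand]; linarith
  refine ⟨hb, ?_⟩
  -- the limit
  have hphi : Tendsto (fun R : ℝ => ∫ z, a z * (1 - (max (1 - ‖z‖ / R) 0) ^ d))
      atTop (𝓝 0) := by
    have key := tendsto_integral_filter_of_dominated_convergence
      (μ := (volume : Measure (Esp d))) (l := atTop)
      (F := fun (R : ℝ) (z : Esp d) => a z * (1 - (max (1 - ‖z‖ / R) 0) ^ d))
      (f := fun _ : Esp d => (0:ℝ)) a ?_ ?_ ha_int ?_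
    · simpa using key
    · refine Filter.Eventually.of_forall fun R => ?_
      exact (ha_cont.mul (continuous_const.sub
        (((continuous_const.sub (continuous_norm.div_const R)).max continuous_const).pow d))).aestronglyMeasurable
    · filter_upwards [eventually_gt_atTop (0:ℝ)] with R hR
      refine Filter.Eventually.of_forall fun z => ?_
      have hm0 : 0 ≤ (max (1 - ‖z‖ / R) 0) ^ d := pow_nonneg (le_max_right _ _) d
      have hm1 : (max (1 - ‖z‖ / R) 0) ^ d ≤ 1 := by
        refine pow_le_one₀ (le_max_right _ _) (max_le ?_ zero_le_one)
        have : 0 ≤ ‖z‖ / R := div_nonneg (norm_nonneg z) hR.le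
        linarith
      rw [Real.norm_eq_abs, abs_of_nonneg (mul_nonneg (ha_nonneg z) (by linarith))]
      exact mul_le_of_le_one_right (ha_nonneg z) (by linarith)
    · refine Filter.Eventually.of_forall fun z => ?_
      have l1 : Tendsto (fun R : ℝ => ‖z‖ / R) atTop (𝓝 0) :=
        tendsto_const_nhds.div_atTop tendsto_id
      have l2 : Tendsto (fun R : ℝ => 1 - ‖z‖ / R) atTop (𝓝 1) := by
        simpa using tendsto_const_nhds.sub l1
      have l3 : Tendsto (fun R : ℝ => max (1 - ‖z‖ / R) 0) atTop (𝓝 1) := by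
        simpa using l2.max (tendsto_const_nhds (x := (0:ℝ)))
      have l4 : Tendsto (fun R : ℝ => (max (1 - ‖z‖ / R) 0) ^ d) atTop (𝓝 1) := by
        simpa using l3.pow d
      have l5 : Tendsto (fun R : ℝ => a z * (1 - (max (1 - ‖z‖ / R) 0) ^ d))
          atTop (𝓝 (a z * (1 - 1))) :=
        tendsto_const_nhds.mul (tendsto_const_nhds.sub l4)
      simpa using l5
  have hnegphi : Tendsto
      (fun R : ℝ => -(∫ z, a z * (1 - (max (1 - ‖z‖ / R) 0) ^ d))) atTop (𝓝 0) := by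
    simpa using hphi.neg
  refine tendsto_of_tendsto_of_tendsto_of_le_of_le' hnegphi tendsto_const_nhds ?_ ?_
  · filter_upwards [eventually_gt_atTop (0:ℝ)] with R hR
    obtain ⟨h1, h2⟩ := hb R hR
    have hVpos : 0 < V R :=
      ENNReal.toReal_pos (measure_ball_pos volume 0 hR).ne' measure_ball_lt_top.ne
    have hineq : -(V R * ∫ z, a z * (1 - (max (1 - ‖z‖ / R) 0) ^ d))
        ≤ (inner ℝ (L₀ (χ R)) (χ R) : ℝ) := by linarith
    calc -(∫ z, a z * (1 - (max (1 - ‖z‖ / R) 0) ^ d))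
        = (V R)⁻¹ * (-(V R * ∫ z, a z * (1 - (max (1 - ‖z‖ / R) 0) ^ d))) := by
          field_simp
      _ ≤ (V R)⁻¹ * (inner ℝ (L₀ (χ R)) (χ R) : ℝ) :=
          mul_le_mul_of_nonneg_left hineq (inv_nonneg.2 hVpos.le)
  · filter_upwards [eventually_gt_atTop (0:ℝ)] with R hR
    obtain ⟨h1, _⟩ := hb R hR
    have hVnn : 0 ≤ (V R)⁻¹ := inv_nonneg.2 (ENNReal.toReal_nonneg)
    have : (inner ℝ (L₀ (χ R)) (χ R) : ℝ) ≤ 0 := by linarith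
    exact mul_nonpos_of_nonneg_of_nonpos hVnn this
end
end

section
/- Suppose λ > 0 is the maximum of the spectrum of L, λ is an isolated point of the spectrum, and the eigenspace {u ∈ L² : Lu = λu} is one-dimensional, spanned by ψ ∈ L²(ℝ^d) with ‖ψ‖_{L²} = 1 and ψ > 0 almost everywhere. Then for every u₀ ∈ L²(ℝ^d) with u₀ ≥ 0 almost everywhere and u₀ ≠ 0, and every bounded measurable set D ⊂ ℝ^d of positive Lebesgue measure, ∫_D (e^{tL} u₀)(x) dx → +∞ as t → ∞. -/
open MeasureTheory Filter Metric Topology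

noncomputable section

set_option maxHeartbeats 4000000
set_option synthInstance.maxHeartbeats 1000000

open NormedSpace

local notation "⟪" x ", " y "⟫" => @inner ℝ _ _ x y

section AuxiliaryHilbert

variable {E : Type*} [NormedAddCommGroup E] [InnerProductSpace ℝ E] [CompleteSpace E]

lemma isUnit_of_isSelfAdjoint_bddBelow (S : E →L[ℝ] E) (hS : IsSelfAdjoint S) {c : ℝ}
    (hc : 0 < c) (h : ∀ x, c * ‖x‖ ≤ ‖S x‖) : IsUnit S := by
  have hx0 : ∀ x : E, S x = 0 → x = 0 := by
    intro x hx
    have := h x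
    rw [hx, norm_zero] at this
    have : ‖x‖ ≤ 0 := by nlinarith
    simpa using le_antisymm this (norm_nonneg x)
  have hker : LinearMap.ker (S : E →ₗ[ℝ] E) = ⊥ := by
    rw [LinearMap.ker_eq_bot']
    intro x hx; exact hx0 x hx
  have hanti : AntilipschitzWith ⟨c⁻¹, by positivity⟩ (⇑S) := by
    apply AddMonoidHomClass.antilipschitz_of_bound
    intro x
    show ‖x‖ ≤ c⁻¹ * ‖S x‖
    rw [inv_mul_eq_div, le_div_iff₀ hc, mul_comm]
    exact h x
  have hclosed : IsClosed (Set.range ⇑S) := hanti.isClosed_range S.uniformContinuous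
  have horth : (LinearMap.range (S : E →ₗ[ℝ] E))ᗮ = ⊥ := by
    rw [Submodule.eq_bot_iff]
    intro x hx
    have hSx : S x = 0 := by
      have hsymm : ∀ a b : E, ⟪S a, b⟫ = ⟪a, S b⟫ := fun a b => hS.isSymmetric a b
      have h0 : ∀ y : E, ⟪y, S x⟫ = 0 := fun y => by
        rw [← hsymm y x]
        exact hx (S y) (LinearMap.mem_range_self _ y)
      have := h0 (S x)
      rwa [real_inner_self_eq_norm_sq, pow_eq_zero_iff (by norm_num), norm_eq_zero] at this
    exact hx0 x hSx
  have hrange : LinearMap.range (S : E →ₗ[ℝ] E) = ⊤ := by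
    have h1 : (LinearMap.range (S : E →ₗ[ℝ] E)).topologicalClosure = ⊤ := by
      rw [← Submodule.orthogonal_orthogonal_eq_closure, horth, Submodule.bot_orthogonal_eq_top]
    rw [Submodule.eq_top_iff']
    intro x
    have hx : x ∈ (LinearMap.range (S : E →ₗ[ℝ] E)).topologicalClosure := h1 ▸ Submodule.mem_top
    rwa [IsClosed.submodule_topologicalClosure_eq hclosed] at hx
  let e := ContinuousLinearEquiv.ofBijective S hker hrange
  have he : ∀ x, e x = S x := fun x => rfl
  refine ⟨⟨S, e.symm.toContinuousLinearMap, ?_, ?_⟩, rfl⟩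
  · ext x
    show S (e.symm x) = x
    rw [← he]
    exact e.apply_symm_apply x
  · ext x
    show e.symm (S x) = x
    rw [← he]
    exact e.symm_apply_apply x

lemma isUnit_of_isSelfAdjoint_coercive (S : E →L[ℝ] E) (hS : IsSelfAdjoint S) {c : ℝ}
    (hc : 0 < c) (h : ∀ x, c * ‖x‖ ^ 2 ≤ ⟪S x, x⟫) : IsUnit S := by
  refine isUnit_of_isSelfAdjoint_bddBelow S hS hc (fun x => ?_)
  rcases eq_or_ne x 0 with rfl | hx
  · simp
  have h1 : c * ‖x‖ ^ 2 ≤ ‖S x‖ * ‖x‖ := (h x).trans (real_inner_le_norm _ _)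
  have hxn : 0 < ‖x‖ := norm_pos_iff.mpr hx
  nlinarith

lemma psd_inner_mul_le (P : E →L[ℝ] E) (hP : IsSelfAdjoint P)
    (hpsd : ∀ x, 0 ≤ ⟪P x, x⟫) (v w : E) :
    ⟪P v, w⟫ ^ 2 ≤ ⟪P v, v⟫ * ⟪P w, w⟫ := by
  have hsymm : ∀ a b : E, ⟪P a, b⟫ = ⟪a, P b⟫ := fun a b => hP.isSymmetric a b
  have key : ∀ t : ℝ, 0 ≤ ⟪P w, w⟫ * (t * t) + (2 * ⟪P v, w⟫) * t + ⟪P v, v⟫ := by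
    intro t
    have := hpsd (v + t • w)
    have hexp : ⟪P (v + t • w), v + t • w⟫
        = ⟪P v, v⟫ + t * ⟪P v, w⟫ + (t * ⟪P w, v⟫ + t * t * ⟪P w, w⟫) := by
      rw [map_add, ContinuousLinearMap.map_smul]
      simp [inner_add_add_self, inner_add_left, inner_add_right, inner_smul_left,
        inner_smul_right, real_inner_smul_left, real_inner_smul_right]
      ring
    have hwv : ⟪P w, v⟫ = ⟪P v, w⟫ := by
      rw [hsymm w v, real_inner_comm]
    rw [hexp, hwv] at this
    nlinarith [this]
  have hd := discrim_le_zero key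
  rw [discrim] at hd
  nlinarith [hd]

/-- If the spectrum of a selfadjoint operator is bounded below by `m`,
then so is its quadratic form. -/
lemma inner_ge_of_spectrum_ge (S : E →L[ℝ] E) (hS : IsSelfAdjoint S) (m : ℝ)
    (h : ∀ μ ∈ spectrum ℝ S, m ≤ μ) (x : E) : m * ‖x‖ ^ 2 ≤ ⟪S x, x⟫ := by
  by_contra hcon
  push_neg at hcon
  have hx : x ≠ 0 := by
    rintro rfl
    simp at hcon
  have hxn : 0 < ‖x‖ := norm_pos_iff.mpr hx
  set R : Set ℝ := (fun v : E => ⟪S v, v⟫) '' {v : E | ‖v‖ = 1} with hR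
  have hne : R.Nonempty := ⟨_, ⟨(‖x‖⁻¹ • x), by simp [norm_smul, inv_mul_cancel₀ hxn.ne'], rfl⟩⟩
  have hbdd : BddBelow R := by
    refine ⟨-‖S‖, fun r hr => ?_⟩
    obtain ⟨v, hv, rfl⟩ := hr
    have h1 : |⟪S v, v⟫| ≤ ‖S v‖ * ‖v‖ := abs_real_inner_le_norm _ _
    have h2 : ‖S v‖ ≤ ‖S‖ * ‖v‖ := S.le_opNorm v
    have hv1 : ‖v‖ = 1 := hv
    rw [hv1] at h1 h2
    simp at h1 h2
    linarith [neg_abs_le (⟪S v, v⟫)]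
  set m' := sInf R with hm'
  have hm'lt : m' < m := by
    have hmem : ⟪S (‖x‖⁻¹ • x), (‖x‖⁻¹ • x)⟫ ∈ R :=
      ⟨(‖x‖⁻¹ • x), by simp [norm_smul, inv_mul_cancel₀ hxn.ne'], rfl⟩
    have hval : ⟪S (‖x‖⁻¹ • x), (‖x‖⁻¹ • x)⟫ = (‖x‖⁻¹)^2 * ⟪S x, x⟫ := by
      rw [ContinuousLinearMap.map_smul]
      rw [real_inner_smul_left, real_inner_smul_right]
      ring
    have : (‖x‖⁻¹)^2 * ⟪S x, x⟫ < (‖x‖⁻¹)^2 * (m * ‖x‖^2) := by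
      apply mul_lt_mul_of_pos_left hcon (by positivity)
    have h2 : (‖x‖⁻¹)^2 * (m * ‖x‖^2) = m := by
      field_simp
    calc m' ≤ ⟪S (‖x‖⁻¹ • x), (‖x‖⁻¹ • x)⟫ := csInf_le hbdd hmem
    _ = (‖x‖⁻¹)^2 * ⟪S x, x⟫ := hval
    _ < m := by rw [← h2] at *; linarith
  -- m' is in the spectrum
  have hmem : m' ∈ spectrum ℝ S := by
    by_contra hns
    rw [spectrum.notMem_iff] at hns
    obtain ⟨un, hun⟩ := hns
    set N := (↑un⁻¹ : E →L[ℝ] E) with hN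
    have hNA : ∀ y : E, N ((algebraMap ℝ (E →L[ℝ] E) m') y - S y) = y := by
      intro y
      have : (↑un⁻¹ * ↑un : E →L[ℝ] E) y = y := by rw [un.inv_mul]; rfl
      rw [hun] at this
      simpa [ContinuousLinearMap.mul_apply] using this
    set P := S - algebraMap ℝ (E →L[ℝ] E) m' with hP
    have hPval : ∀ y : E, P y = S y - m' • y := by
      intro y
      simp [hP, Algebra.algebraMap_eq_smul_one]
    have hSsymm : ∀ a b : E, ⟪S a, b⟫ = ⟪a, S b⟫ := fun a b => hS.isSymmetric a b
    have hPsa : IsSelfAdjoint P := by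
      rw [ContinuousLinearMap.isSelfAdjoint_iff_isSymmetric]
      intro a b
      show ⟪P a, b⟫ = ⟪a, P b⟫
      rw [hPval a, hPval b, inner_sub_left, inner_sub_right, hSsymm a b,
        real_inner_smul_left, real_inner_smul_right]
    have hPpsd : ∀ y : E, 0 ≤ ⟪P y, y⟫ := by
      intro y
      rcases eq_or_ne y 0 with rfl | hy
      · simp
      have hyn : 0 < ‖y‖ := norm_pos_iff.mpr hy
      have hmem2 : ⟪S (‖y‖⁻¹ • y), (‖y‖⁻¹ • y)⟫ ∈ R :=
        ⟨(‖y‖⁻¹ • y), by simp [norm_smul, inv_mul_cancel₀ hyn.ne'], rfl⟩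
      have h3 := csInf_le hbdd hmem2
      have hval : ⟪S (‖y‖⁻¹ • y), (‖y‖⁻¹ • y)⟫ = (‖y‖⁻¹)^2 * ⟪S y, y⟫ := by
        rw [ContinuousLinearMap.map_smul, real_inner_smul_left, real_inner_smul_right]; ring
      rw [hval] at h3
      have h4 : m' * ‖y‖^2 ≤ ⟪S y, y⟫ := by
        have h5 : (‖y‖⁻¹)^2 * ⟪S y, y⟫ * ‖y‖^2 = ⟪S y, y⟫ := by field_simp
        calc m' * ‖y‖^2 ≤ (‖y‖⁻¹)^2 * ⟪S y, y⟫ * ‖y‖^2 := by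
              apply mul_le_mul_of_nonneg_right h3 (by positivity)
        _ = ⟪S y, y⟫ := h5
      rw [hPval y, inner_sub_left, real_inner_smul_left, real_inner_self_eq_norm_sq]
      linarith
    -- choose v with small form
    set δ := 1 / (‖N‖^2 * ‖P‖ + 1) with hδ
    have hδpos : 0 < δ := by positivity
    obtain ⟨r, hrR, hrlt⟩ := Real.lt_sInf_add_pos hne hδpos
    obtain ⟨v, hv1, rfl⟩ := hrR
    have hv1' : ‖v‖ = 1 := hv1
    have hPv : ⟪P v, v⟫ < δ := by
      rw [hPval v, inner_sub_left, real_inner_smul_left, real_inner_self_eq_norm_sq, hv1']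
      simp only [one_pow, mul_one]
      linarith [hrlt]
    -- ‖P v‖^2 ≤ ‖P‖ * ⟪P v, v⟫
    have hPnorm : ‖P v‖^2 ≤ ‖P‖ * ⟪P v, v⟫ := by
      rcases eq_or_ne (‖P v‖) 0 with h0 | h0
      · rw [h0]
        simpa using mul_nonneg (norm_nonneg P) (hPpsd v)
      have hcs := psd_inner_mul_le P hPsa hPpsd v (P v)
      have h6 : ⟪P (P v), P v⟫ ≤ ‖P‖ * ‖P v‖^2 := by
        calc ⟪P (P v), P v⟫ ≤ ‖P (P v)‖ * ‖P v‖ := real_inner_le_norm _ _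
        _ ≤ (‖P‖ * ‖P v‖) * ‖P v‖ := by
              apply mul_le_mul_of_nonneg_right (P.le_opNorm _) (norm_nonneg _)
        _ = ‖P‖ * ‖P v‖^2 := by ring
      have h7 : ⟪P v, P v⟫ = ‖P v‖^2 := real_inner_self_eq_norm_sq _
      rw [h7] at hcs
      have h8 : (‖P v‖^2)^2 ≤ ⟪P v, v⟫ * (‖P‖ * ‖P v‖^2) := by
        calc (‖P v‖^2)^2 ≤ ⟪P v, v⟫ * ⟪P (P v), P v⟫ := hcs
        _ ≤ ⟪P v, v⟫ * (‖P‖ * ‖P v‖^2) := by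
              apply mul_le_mul_of_nonneg_left h6 (hPpsd v)
      have h9 : 0 < ‖P v‖^2 := by positivity
      nlinarith [h8, h9]
    -- contradiction
    have hNv : (1:ℝ) ≤ ‖N‖^2 * ‖P v‖^2 := by
      have h10 : N (algebraMap ℝ (E →L[ℝ] E) m' v - S v) = v := hNA v
      have h11 : ‖v‖ ≤ ‖N‖ * ‖algebraMap ℝ (E →L[ℝ] E) m' v - S v‖ := by
        conv_lhs => rw [← h10]
        exact N.le_opNorm _
      have h12 : algebraMap ℝ (E →L[ℝ] E) m' v - S v = -(P v) := by
        rw [hPval v]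
        simp [Algebra.algebraMap_eq_smul_one]
      rw [h12, norm_neg, hv1'] at h11
      nlinarith [norm_nonneg N, norm_nonneg (P v), h11]
    have hfin : ‖N‖^2 * ‖P v‖^2 ≤ ‖N‖^2 * (‖P‖ * ⟪P v, v⟫) := by
      apply mul_le_mul_of_nonneg_left hPnorm (by positivity)
    have : (1:ℝ) < 1 := by
      calc (1:ℝ) ≤ ‖N‖^2 * ‖P v‖^2 := hNv
      _ ≤ ‖N‖^2 * (‖P‖ * ⟪P v, v⟫) := hfin
      _ ≤ ‖N‖^2 * (‖P‖ * δ) := by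
            apply mul_le_mul_of_nonneg_left _ (by positivity)
            apply mul_le_mul_of_nonneg_left (le_of_lt hPv) (norm_nonneg _)
      _ = (‖N‖^2 * ‖P‖) * δ := by ring
      _ < 1 := by
            rw [hδ]
            rw [mul_one_div]
            rw [div_lt_one (by positivity)]
            linarith
    exact absurd this (lt_irrefl 1)
  exact absurd (h m' hmem) (not_le.mpr hm'lt)

open Polynomial in
lemma gap_coercive (B : E →L[ℝ] E) (hB : IsSelfAdjoint B) {ε : ℝ} (hε : 0 < ε)
    (hspec : ∀ μ ∈ spectrum ℝ B, μ = 0 ∨ ε ≤ μ) :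
    ∃ δ > 0, ∀ u ∈ (LinearMap.ker (B : E →ₗ[ℝ] E))ᗮ, δ * ‖u‖ ^ 2 ≤ ⟪B u, u⟫ := by
  have hBsymm : ∀ a b : E, ⟪B a, b⟫ = ⟪a, B b⟫ := fun a b => hB.isSymmetric a b
  have hpsd : ∀ x, 0 ≤ ⟪B x, x⟫ := by
    intro x
    have := inner_ge_of_spectrum_ge B hB 0 (fun μ hμ => by rcases hspec μ hμ with h | h <;> linarith) x
    simpa using this
  have hnotmem : ∀ r : ℝ, r ≠ 0 → r < ε → IsUnit (B - algebraMap ℝ (E →L[ℝ] E) r) := by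
    intro r hr0 hrε
    have : r ∉ spectrum ℝ B := by
      intro hmem
      rcases hspec r hmem with h | h
      · exact hr0 h
      · linarith
    rw [spectrum.notMem_iff] at this
    rw [← neg_sub]
    exact this.neg
  have hlin : ∀ r : ℝ, r ≠ 0 → r < ε → IsUnit ((aeval B) (X - C r)) := by
    intro r h1 h2
    rw [map_sub, aeval_X, aeval_C]
    exact hnotmem r h1 h2
  -- quadratic factors with no real roots are invertible
  have hquadunit : ∀ β γ : ℝ, 0 < γ - β ^ 2 / 4 → IsUnit ((aeval B) (X ^ 2 + C β * X + C γ)) := by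
    intro β γ hβγ
    set Q : E →L[ℝ] E := (aeval B) (X ^ 2 + C β * X + C γ) with hQ
    have hQval : ∀ y, Q y = B (B y) + β • B y + γ • y := by
      intro y
      rw [hQ, map_add, map_add, aeval_X_pow, map_mul, aeval_C, aeval_X]
      simp [ContinuousLinearMap.mul_apply, pow_two, Algebra.algebraMap_eq_smul_one]
    have hQsa : IsSelfAdjoint Q := by
      rw [ContinuousLinearMap.isSelfAdjoint_iff_isSymmetric]
      intro a b
      show ⟪Q a, b⟫ = ⟪a, Q b⟫
      rw [hQval a, hQval b]
      rw [inner_add_left, inner_add_left, inner_add_right, inner_add_right]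
      rw [real_inner_smul_left, real_inner_smul_left, real_inner_smul_right,
        real_inner_smul_right, hBsymm (B a) b, hBsymm a (B b), hBsymm a b]
    have hQcoer : ∀ y, (γ - β ^ 2 / 4) * ‖y‖ ^ 2 ≤ ⟪Q y, y⟫ := by
      intro y
      rw [hQval y, inner_add_left, inner_add_left, real_inner_smul_left, real_inner_smul_left,
        real_inner_self_eq_norm_sq]
      have h1 : ⟪B (B y), y⟫ = ‖B y‖ ^ 2 := by
        rw [hBsymm (B y) y, real_inner_self_eq_norm_sq]
      rw [h1]
      obtain ⟨hlo, hhi⟩ := abs_le.mp (abs_real_inner_le_norm (B y) y)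
      rcases le_or_gt 0 β with hβ | hβ
      · nlinarith [sq_nonneg (‖B y‖ - (β/2) * ‖y‖), mul_le_mul_of_nonneg_left hlo hβ]
      · nlinarith [sq_nonneg (‖B y‖ + (β/2) * ‖y‖), mul_le_mul_of_nonpos_left hhi hβ.le]
    exact isUnit_of_isSelfAdjoint_coercive Q hQsa hβγ hQcoer
  -- the quartic polynomial is invertible for negative ν
  have hunit_quartic : ∀ ν : ℝ, ν < 0 →
      IsUnit ((aeval B) (X ^ 4 - C (ε ^ 2) * X ^ 2 - C ν)) := by
    intro ν hν
    rcases le_or_gt (-(ε ^ 4 / 4)) ν with hcase | hcase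
    · -- four real roots
      set s := Real.sqrt (ε ^ 4 / 4 + ν) with hs
      have hs0 : 0 ≤ s := Real.sqrt_nonneg _
      have hs2 : s ^ 2 = ε ^ 4 / 4 + ν := Real.sq_sqrt (by linarith)
      have hslt : s < ε ^ 2 / 2 := by nlinarith
      set r₁ := Real.sqrt (ε ^ 2 / 2 - s) with hr₁
      set r₂ := Real.sqrt (ε ^ 2 / 2 + s) with hr₂
      have hr₁0 : 0 < r₁ := Real.sqrt_pos.mpr (by linarith)
      have hr₂0 : 0 < r₂ := Real.sqrt_pos.mpr (by linarith)
      have hr₁2 : r₁ ^ 2 = ε ^ 2 / 2 - s := Real.sq_sqrt (by linarith)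
      have hr₂2 : r₂ ^ 2 = ε ^ 2 / 2 + s := Real.sq_sqrt (by linarith)
      have hr₁ε : r₁ < ε := by nlinarith
      have hr₂ε : r₂ < ε := by nlinarith
      have hpoly : (X - C r₁) * (X + C r₁) * ((X - C r₂) * (X + C r₂))
          = X ^ 4 - C (ε ^ 2) * X ^ 2 - C ν := by
        have hε2 : ε ^ 2 = r₁ ^ 2 + r₂ ^ 2 := by rw [hr₁2, hr₂2]; ring
        have hν2 : ν = -(r₁ ^ 2 * r₂ ^ 2) := by rw [hr₁2, hr₂2]; nlinarith
        rw [hε2, hν2, map_add, map_neg, map_mul, map_pow, map_pow]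
        ring
      rw [← hpoly, map_mul, map_mul, map_mul]
      have h₁ := hlin r₁ hr₁0.ne' hr₁ε
      have h₂ := hlin r₂ hr₂0.ne' hr₂ε
      have h₃ : IsUnit ((aeval B) (X + C r₁)) := by
        have : (X + C r₁ : ℝ[X]) = X - C (-r₁) := by rw [map_neg, sub_neg_eq_add]
        rw [this]
        exact hlin (-r₁) (by linarith) (by linarith)
      have h₄ : IsUnit ((aeval B) (X + C r₂)) := by
        have : (X + C r₂ : ℝ[X]) = X - C (-r₂) := by rw [map_neg, sub_neg_eq_add]
        rw [this]
        exact hlin (-r₂) (by linarith) (by linarith)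
      exact (h₁.mul h₃).mul (h₂.mul h₄)
    · -- two positive-definite quadratic factors
      set c := Real.sqrt (-ν) with hc
      have hc0 : 0 ≤ c := Real.sqrt_nonneg _
      have hc2 : c ^ 2 = -ν := Real.sq_sqrt (by linarith)
      have hcgt : ε ^ 2 / 2 < c := by nlinarith
      set b := Real.sqrt (2 * c + ε ^ 2) with hb
      have hb2 : b ^ 2 = 2 * c + ε ^ 2 := Real.sq_sqrt (by nlinarith)
      have hδ₀ : 0 < c - b ^ 2 / 4 := by rw [hb2]; nlinarith
      have hpoly : (X ^ 2 + C b * X + C c) * (X ^ 2 + C (-b) * X + C c)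
          = X ^ 4 - C (ε ^ 2) * X ^ 2 - C ν := by
        have hCε : (C (ε ^ 2) : ℝ[X]) = C b * C b - 2 * C c := by
          have hbb : b * b = 2 * c + ε ^ 2 := by rw [← pow_two]; exact hb2
          rw [show ε ^ 2 = b * b - 2 * c by linarith]
          rw [map_sub, map_mul, map_mul, map_ofNat]
        have hCν : (C ν : ℝ[X]) = -(C c * C c) := by
          rw [show ν = -(c * c) by rw [← sq c, hc2]; ring, map_neg, map_mul]
        rw [hCε, hCν, map_neg]
        ring
      rw [← hpoly, map_mul]
      exact (hquadunit b c hδ₀).mul (hquadunit (-b) c (by rw [neg_pow]; simpa using hδ₀))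
  -- spectrum of the quartic operator is nonnegative, hence its form is nonnegative
  set S : E →L[ℝ] E := (aeval B) (X ^ 4 - C (ε ^ 2) * X ^ 2) with hSdef
  have hSsa : IsSelfAdjoint S := by
    have hSval : ∀ y, S y = B (B (B (B y))) - (ε ^ 2) • (B (B y)) := by
      intro y
      rw [hSdef, map_sub, aeval_X_pow, map_mul, aeval_C, aeval_X_pow]
      simp [ContinuousLinearMap.mul_apply, pow_succ, Algebra.algebraMap_eq_smul_one]
    rw [ContinuousLinearMap.isSelfAdjoint_iff_isSymmetric]
    intro a b'
    show ⟪S a, b'⟫ = ⟪a, S b'⟫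
    rw [hSval a, hSval b', inner_sub_left, inner_sub_right, real_inner_smul_left,
      real_inner_smul_right, hBsymm (B (B (B a))) b', hBsymm (B (B a)) (B b'),
      hBsymm (B a) (B (B b')), hBsymm a (B (B (B b'))), hBsymm (B a) b', hBsymm a (B b')]
  have hSspec : ∀ μ ∈ spectrum ℝ S, (0:ℝ) ≤ μ := by
    intro μ hμ
    by_contra hneg
    push_neg at hneg
    have hu := hunit_quartic μ hneg
    have heq : (aeval B) (X ^ 4 - C (ε ^ 2) * X ^ 2 - C μ)
        = -(algebraMap ℝ (E →L[ℝ] E) μ - S) := by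
      rw [map_sub, aeval_C, hSdef, neg_sub]
    rw [heq] at hu
    have := hu.neg
    rw [neg_neg] at this
    exact (spectrum.notMem_iff.mpr this) hμ
  have hform : ∀ z, 0 ≤ ⟪S z, z⟫ := by
    intro z
    have := inner_ge_of_spectrum_ge S hSsa 0 hSspec z
    simpa using this
  -- ε ‖B z‖ ≤ ‖B (B z)‖ for all z
  have hquad : ∀ z, ε * ‖B z‖ ≤ ‖B (B z)‖ := by
    intro z
    have hSval : S z = B (B (B (B z))) - (ε ^ 2) • (B (B z)) := by
      rw [hSdef, map_sub, aeval_X_pow, map_mul, aeval_C, aeval_X_pow]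
      simp [ContinuousLinearMap.mul_apply, pow_succ, Algebra.algebraMap_eq_smul_one]
    have h1 := hform z
    rw [hSval, inner_sub_left, real_inner_smul_left] at h1
    have h2 : ⟪B (B (B (B z))), z⟫ = ‖B (B z)‖ ^ 2 := by
      rw [hBsymm (B (B (B z))) z, hBsymm (B (B z)) (B z), real_inner_self_eq_norm_sq]
    have h3 : ⟪B (B z), z⟫ = ‖B z‖ ^ 2 := by
      rw [hBsymm (B z) z, real_inner_self_eq_norm_sq]
    rw [h2, h3] at h1
    nlinarith [norm_nonneg (B (B z)), norm_nonneg (B z), mul_nonneg hε.le (norm_nonneg (B z))]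
  -- orthogonal complement of the kernel is contained in the closure of the range
  have hbdd : ∀ u ∈ (LinearMap.ker (B : E →ₗ[ℝ] E))ᗮ, ε * ‖u‖ ≤ ‖B u‖ := by
    intro u hu
    have horth : (LinearMap.range (B : E →ₗ[ℝ] E))ᗮ = LinearMap.ker (B : E →ₗ[ℝ] E) := by
      ext x
      constructor
      · intro hx
        have h0 : ∀ y : E, ⟪y, B x⟫ = 0 := fun y => by
          rw [← hBsymm y x]
          exact hx (B y) (LinearMap.mem_range_self _ y)
        have := h0 (B x)
        rw [real_inner_self_eq_norm_sq, pow_eq_zero_iff (by norm_num), norm_eq_zero] at this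
        exact this
      · intro hx y hy
        obtain ⟨z, rfl⟩ := hy
        show ⟪(B : E →ₗ[ℝ] E) z, x⟫ = 0
        have hx' : B x = 0 := hx
        calc ⟪B z, x⟫ = ⟪z, B x⟫ := hBsymm z x
        _ = 0 := by rw [hx']; simp
    have hu2 : u ∈ (LinearMap.range (B : E →ₗ[ℝ] E)).topologicalClosure := by
      rw [← Submodule.orthogonal_orthogonal_eq_closure, horth]
      exact hu
    have hu3 : u ∈ closure ((LinearMap.range (B : E →ₗ[ℝ] E)) : Set E) := hu2
    have hset : closure ((LinearMap.range (B : E →ₗ[ℝ] E)) : Set E)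
        ⊆ {w : E | ε * ‖w‖ ≤ ‖B w‖} := by
      apply closure_minimal
      · rintro w ⟨z, rfl⟩
        exact hquad z
      · apply isClosed_le
        · exact continuous_const.mul continuous_norm
        · exact continuous_norm.comp B.continuous
    exact hset hu3
  -- conclude coercivity
  refine ⟨ε ^ 2 / (‖B‖ + 1), by positivity, fun u hu => ?_⟩
  have h1 := hbdd u hu
  have hBpos : (0:ℝ) < ‖B‖ + 1 := by positivity
  rcases eq_or_ne (‖B u‖) 0 with h0 | h0
  · rw [h0] at h1
    have hu0 : ‖u‖ = 0 := by nlinarith [norm_nonneg u]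
    rw [hu0]
    simpa using hpsd u
  · -- ‖B u‖² ≤ (‖B‖+1) ⟪B u, u⟫
    have hcs := psd_inner_mul_le B hB hpsd u (B u)
    have h6 : ⟪B (B u), B u⟫ ≤ ‖B‖ * ‖B u‖ ^ 2 := by
      calc ⟪B (B u), B u⟫ ≤ ‖B (B u)‖ * ‖B u‖ := real_inner_le_norm _ _
      _ ≤ (‖B‖ * ‖B u‖) * ‖B u‖ := by
            apply mul_le_mul_of_nonneg_right (B.le_opNorm _) (norm_nonneg _)
      _ = ‖B‖ * ‖B u‖ ^ 2 := by ring
    have h7 : ⟪B u, B u⟫ = ‖B u‖ ^ 2 := real_inner_self_eq_norm_sq _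
    rw [h7] at hcs
    have h9 : 0 < ‖B u‖ ^ 2 := by positivity
    have h8 : ‖B u‖ ^ 2 ≤ (‖B‖ + 1) * ⟪B u, u⟫ := by
      nlinarith [hpsd u, hcs, h6, mul_le_mul_of_nonneg_left h6 (hpsd u)]
    have h10 : ε ^ 2 * ‖u‖ ^ 2 ≤ ‖B u‖ ^ 2 := by
      have := mul_le_mul h1 h1 (by positivity) (norm_nonneg (B u))
      nlinarith [this]
    rw [div_mul_eq_mul_div, div_le_iff₀ hBpos]
    nlinarith [h8, h10]

lemma exp_apply_eigen (T : E →L[ℝ] E) (ψ : E) (lam : ℝ) (h : T ψ = lam • ψ) (s : ℝ) :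
    exp (s • T) ψ = Real.exp (s * lam) • ψ := by
  have hn : ∀ n : ℕ, ((s • T) ^ n) ψ = (s * lam) ^ n • ψ := by
    intro n
    induction n with
    | zero => simp
    | succ n ih =>
      rw [pow_succ, ContinuousLinearMap.mul_apply]
      have h1 : (s • T) ψ = (s * lam) • ψ := by
        rw [ContinuousLinearMap.smul_apply, h, smul_smul]
      rw [h1, ContinuousLinearMap.map_smul, ih, smul_smul]
      congr 1
      ring
  have hsum := expSeries_summable' (𝕂 := ℝ) (s • T)
  have happ : exp (s • T) ψ = ∑' n : ℕ, ((n.factorial : ℝ)⁻¹ • (s • T) ^ n) ψ := by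
    rw [exp_eq_tsum ℝ]
    exact (ContinuousLinearMap.apply ℝ E ψ).map_tsum hsum
  rw [happ]
  have heq : ∀ n : ℕ, ((n.factorial : ℝ)⁻¹ • (s • T) ^ n) ψ
      = ((n.factorial : ℝ)⁻¹ * (s * lam) ^ n) • ψ := by
    intro n
    rw [ContinuousLinearMap.smul_apply, hn n, smul_smul]
  rw [tsum_congr heq]
  have hsum2 : Summable fun n : ℕ => (n.factorial : ℝ)⁻¹ * (s * lam) ^ n := by
    have := Real.summable_pow_div_factorial (s * lam)
    apply this.congr
    intro n
    rw [div_eq_mul_inv, mul_comm]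
  rw [hsum2.tsum_smul_const]
  congr 1
  rw [Real.exp_eq_exp_ℝ, exp_eq_tsum ℝ]
  apply tsum_congr
  intro n
  rw [smul_eq_mul]

lemma norm_exp_le_of_form_bound (T : E →L[ℝ] E) (hT : IsSelfAdjoint T) (ψ : E) (lam μ : ℝ)
    (hψeig : T ψ = lam • ψ)
    (hform : ∀ u : E, ⟪u, ψ⟫ = 0 → ⟪T u, u⟫ ≤ μ * ‖u‖ ^ 2)
    (v : E) (hv : ⟪v, ψ⟫ = 0) (t : ℝ) (ht : 0 ≤ t) :
    ‖exp (t • T) v‖ ≤ ‖v‖ * Real.exp (μ * t) := by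
  set w : ℝ → E := fun s => exp (s • T) v with hw
  have hTsymm : ∀ a b : E, ⟪T a, b⟫ = ⟪a, T b⟫ := fun a b => hT.isSymmetric a b
  -- exp is selfadjoint
  have hsexp : ∀ s : ℝ, IsSelfAdjoint (exp (s • T)) := by
    intro s
    have h1 : IsSelfAdjoint (s • T) := by
      rw [IsSelfAdjoint]
      rw [star_smul, star_trivial, hT]
    exact h1.exp
  -- orthogonality is preserved
  have hw_orth : ∀ s : ℝ, ⟪w s, ψ⟫ = 0 := by
    intro s
    have hsymm : ∀ a b : E, ⟪(exp (s • T)) a, b⟫ = ⟪a, (exp (s • T)) b⟫ :=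
      fun a b => (hsexp s).isSymmetric a b
    rw [hw]
    show ⟪(exp (s • T)) v, ψ⟫ = 0
    rw [hsymm v ψ, exp_apply_eigen T ψ lam hψeig s, real_inner_smul_right, hv, mul_zero]
  -- derivative of w
  have hwderiv : ∀ s : ℝ, HasDerivAt w (T (w s)) s := by
    intro s
    have h1 := hasDerivAt_exp_smul_const (𝕂 := ℝ) T s
    have h2 : HasDerivAt (fun u : ℝ => v) 0 s := hasDerivAt_const s v
    have h3 := h1.clm_apply h2
    simp only [map_zero, add_zero] at h3
    have hcomm : exp (s • T) * T = T * exp (s • T) := by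
      have hc : Commute (s • T) T := by
        show (s • T) * T = T * (s • T)
        rw [smul_mul_assoc, mul_smul_comm]
      exact (hc.exp_left).eq
    have h4 : (exp (s • T) * T) v = T (w s) := by
      rw [hcomm, ContinuousLinearMap.mul_apply]
    rwa [h4] at h3
  -- g = ‖w‖²
  set g : ℝ → ℝ := fun s => ⟪w s, w s⟫ with hg
  have hgderiv : ∀ s : ℝ, HasDerivAt g (2 * ⟪T (w s), w s⟫) s := by
    intro s
    have := (hwderiv s).inner ℝ (hwderiv s)
    have h5 : (⟪w s, T (w s)⟫ : ℝ) + ⟪T (w s), w s⟫ = 2 * ⟪T (w s), w s⟫ := by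
      rw [real_inner_comm (w s) (T (w s))]; ring
    rwa [h5] at this
  -- φ is antitone
  set φ : ℝ → ℝ := fun s => g s * Real.exp (-(2 * μ) * s) with hφ
  have hφderiv : ∀ s : ℝ, HasDerivAt φ
      ((2 * ⟪T (w s), w s⟫) * Real.exp (-(2 * μ) * s)
        + g s * (Real.exp (-(2 * μ) * s) * (-(2 * μ)))) s := by
    intro s
    have hexp : HasDerivAt (fun s : ℝ => Real.exp (-(2 * μ) * s))
        (Real.exp (-(2 * μ) * s) * (-(2 * μ))) s := by
      have h6 : HasDerivAt (fun s : ℝ => -(2 * μ) * s) (-(2 * μ)) s := by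
        simpa using (hasDerivAt_id s).const_mul (-(2 * μ))
      exact h6.exp
    exact (hgderiv s).mul hexp
  have hφanti : Antitone φ := by
    apply antitone_of_deriv_nonpos
    · intro s
      exact (hφderiv s).differentiableAt
    · intro s
      rw [(hφderiv s).deriv]
      have h7 : ⟪T (w s), w s⟫ ≤ μ * ‖w s‖ ^ 2 := hform (w s) (hw_orth s)
      have h8 : g s = ‖w s‖ ^ 2 := real_inner_self_eq_norm_sq _
      have h9 : 0 < Real.exp (-(2 * μ) * s) := Real.exp_pos _
      rw [h8]
      nlinarith [h7, h9, sq_nonneg ‖w s‖]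
  have hφt : φ t ≤ φ 0 := hφanti ht
  have hw0 : w 0 = v := by
    rw [hw]
    show (exp ((0:ℝ) • T)) v = v
    rw [zero_smul, exp_zero, ContinuousLinearMap.one_apply]
  have hg0 : g 0 = ‖v‖ ^ 2 := by rw [hg]; show ⟪w 0, w 0⟫ = ‖v‖^2; rw [hw0, real_inner_self_eq_norm_sq]
  have hgt : g t = ‖w t‖ ^ 2 := real_inner_self_eq_norm_sq _
  have hineq : ‖w t‖ ^ 2 * Real.exp (-(2 * μ) * t) ≤ ‖v‖ ^ 2 := by
    have := hφt
    rw [hφ] at this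
    simp only at this
    rw [hgt] at this
    rw [hg0] at this
    simp only [mul_zero, Real.exp_zero, mul_one] at this
    exact this
  have hE : 0 < Real.exp (-(2 * μ) * t) := Real.exp_pos _
  have h2 : ‖w t‖ ^ 2 ≤ ‖v‖ ^ 2 * Real.exp (2 * μ * t) := by
    rw [← mul_le_mul_iff_of_pos_right hE]
    calc ‖w t‖ ^ 2 * Real.exp (-(2 * μ) * t) ≤ ‖v‖ ^ 2 := hineq
    _ = ‖v‖ ^ 2 * (Real.exp (2 * μ * t) * Real.exp (-(2 * μ) * t)) := by
          rw [← Real.exp_add]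
          have : 2 * μ * t + -(2 * μ) * t = 0 := by ring
          rw [this, Real.exp_zero, mul_one]
    _ = ‖v‖ ^ 2 * Real.exp (2 * μ * t) * Real.exp (-(2 * μ) * t) := by ring
  have h3 : (‖v‖ * Real.exp (μ * t)) ^ 2 = ‖v‖ ^ 2 * Real.exp (2 * μ * t) := by
    rw [mul_pow, pow_two (Real.exp (μ * t)), ← Real.exp_add]
    congr 2
    ring
  calc ‖w t‖ = Real.sqrt (‖w t‖ ^ 2) := by rw [Real.sqrt_sq (norm_nonneg _)]
  _ ≤ Real.sqrt ((‖v‖ * Real.exp (μ * t)) ^ 2) := by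
        apply Real.sqrt_le_sqrt
        rw [h3]
        exact h2
  _ = ‖v‖ * Real.exp (μ * t) := Real.sqrt_sq (by positivity)

end AuxiliaryHilbert

/-- Under the same spectral hypotheses as in Statement 18, for every
`u₀ ≥ 0`, `u₀ ≠ 0` and every bounded measurable `D` of positive Lebesgue measure,
`∫_D (e^{tL} u₀)(x) dx → +∞` as `t → ∞`. -/
theorem mass_in_bounded_domain_tendsto_infinity (d : ℕ) (hd : 1 ≤ d)
    (a : EuclideanSpace ℝ (Fin d) → ℝ)
    (ha_cont : Continuous a) (ha_bdd : ∃ C, ∀ x, |a x| ≤ C)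
    (ha_nonneg : ∀ x, 0 ≤ a x) (ha_even : ∀ x, a (-x) = a x)
    (ha_int : Integrable a) (ha_mass : ∫ x, a x = 1)
    (L₀ : Lp ℝ 2 (volume : Measure (EuclideanSpace ℝ (Fin d))) →L[ℝ]
          Lp ℝ 2 (volume : Measure (EuclideanSpace ℝ (Fin d))))
    (hL₀ : ∀ u : Lp ℝ 2 (volume : Measure (EuclideanSpace ℝ (Fin d))),
      (L₀ u : EuclideanSpace ℝ (Fin d) → ℝ) =ᵐ[volume] fun x => ∫ y, a (x - y) * (u y - u x))
    (V : EuclideanSpace ℝ (Fin d) → ℝ) (hV_cont : Continuous V)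
    (hV01 : ∀ x, 0 ≤ V x ∧ V x ≤ 1)
    (hV0 : Tendsto V (cocompact (EuclideanSpace ℝ (Fin d))) (𝓝 0))
    (Vop : Lp ℝ 2 (volume : Measure (EuclideanSpace ℝ (Fin d))) →L[ℝ]
           Lp ℝ 2 (volume : Measure (EuclideanSpace ℝ (Fin d))))
    (hVop : ∀ u : Lp ℝ 2 (volume : Measure (EuclideanSpace ℝ (Fin d))),
      (Vop u : EuclideanSpace ℝ (Fin d) → ℝ) =ᵐ[volume] fun x => V x * u x)
    (hsa : IsSelfAdjoint (L₀ + Vop))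
    (lam : ℝ) (hlam_pos : 0 < lam)
    (hlam_mem : lam ∈ spectrum ℝ (L₀ + Vop))
    (hlam_max : ∀ μ ∈ spectrum ℝ (L₀ + Vop), μ ≤ lam)
    (hlam_isolated : ∃ ε > 0, ∀ μ ∈ spectrum ℝ (L₀ + Vop), |μ - lam| < ε → μ = lam)
    (ψ : Lp ℝ 2 (volume : Measure (EuclideanSpace ℝ (Fin d))))
    (hψ_norm : ‖ψ‖ = 1)
    (hψ_pos : ∀ᵐ x ∂(volume : Measure (EuclideanSpace ℝ (Fin d))), 0 < ψ x)
    (hψ_eig : (L₀ + Vop) ψ = lam • ψ)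
    (hψ_span : ∀ φ : Lp ℝ 2 (volume : Measure (EuclideanSpace ℝ (Fin d))),
      (L₀ + Vop) φ = lam • φ → ∃ c : ℝ, φ = c • ψ) :
    ∀ u₀ : Lp ℝ 2 (volume : Measure (EuclideanSpace ℝ (Fin d))),
      (∀ᵐ x ∂(volume : Measure (EuclideanSpace ℝ (Fin d))), 0 ≤ u₀ x) → u₀ ≠ 0 →
      ∀ D : Set (EuclideanSpace ℝ (Fin d)),
        MeasurableSet D → Bornology.IsBounded D → 0 < volume D →
        Tendsto
          (fun t : ℝ => ∫ x in D, ((NormedSpace.exp (t • (L₀ + Vop))) u₀ : _ → ℝ) x)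
          atTop atTop := by
  intro u₀ hu₀ hu₀ne D hDmeas hDbdd hDpos
  set T := L₀ + Vop with hTdef
  obtain ⟨ε, hεpos, hiso⟩ := hlam_isolated
  -- the operator B = lam - T
  set Bop : Lp ℝ 2 (volume : Measure (EuclideanSpace ℝ (Fin d))) →L[ℝ] Lp ℝ 2 (volume : Measure (EuclideanSpace ℝ (Fin d))) := algebraMap ℝ (Lp ℝ 2 (volume : Measure (EuclideanSpace ℝ (Fin d))) →L[ℝ] Lp ℝ 2 (volume : Measure (EuclideanSpace ℝ (Fin d)))) lam - T with hBop
  have hTsymm : ∀ x y : Lp ℝ 2 (volume : Measure (EuclideanSpace ℝ (Fin d))), ⟪T x, y⟫ = ⟪x, T y⟫ := fun x y => hsa.isSymmetric x y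
  have hBval : ∀ z : Lp ℝ 2 (volume : Measure (EuclideanSpace ℝ (Fin d))), Bop z = lam • z - T z := by
    intro z
    rw [hBop, ContinuousLinearMap.sub_apply, Algebra.algebraMap_eq_smul_one,
      ContinuousLinearMap.smul_apply, ContinuousLinearMap.one_apply]
  have hBsa : IsSelfAdjoint Bop := by
    rw [ContinuousLinearMap.isSelfAdjoint_iff_isSymmetric]
    intro x y
    show ⟪Bop x, y⟫ = ⟪x, Bop y⟫
    rw [hBval x, hBval y, inner_sub_left, inner_sub_right, real_inner_smul_left,
      real_inner_smul_right, hTsymm x y]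
  have hBspec : ∀ μ ∈ spectrum ℝ Bop, μ = 0 ∨ ε ≤ μ := by
    intro μ hμ
    rw [hBop, ← spectrum.singleton_sub_eq] at hμ
    obtain ⟨r, hr, ν, hν, hrν⟩ := hμ
    rw [Set.mem_singleton_iff] at hr
    have hμeq : μ = lam - ν := by rw [← hr]; exact hrν.symm
    rcases eq_or_ne ν lam with rfl | hne
    · left; rw [hμeq, sub_self]
    · right
      have h1 : ν ≤ lam := hlam_max ν hν
      have h2 : ¬ (|ν - lam| < ε) := fun hc => hne (hiso ν hν hc)
      push_neg at h2
      rw [abs_sub_comm, abs_of_nonneg (by linarith)] at h2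
      rw [hμeq]
      linarith
  -- spectral gap coercivity
  obtain ⟨δ₀, hδ₀pos, hcoer⟩ := gap_coercive Bop hBsa hεpos hBspec
  set δ := min δ₀ (lam / 2) with hδdef
  have hδpos : 0 < δ := lt_min hδ₀pos (by linarith)
  set μ₀ := lam - δ with hμ₀def
  have hμ₀pos : 0 < μ₀ := by
    have : δ ≤ lam / 2 := min_le_right _ _
    simp only [hμ₀def]; linarith
  have hμ₀lt : μ₀ < lam := by simp only [hμ₀def]; linarith
  -- form bound on the orthogonal complement of ψ
  have hform : ∀ u : Lp ℝ 2 (volume : Measure (EuclideanSpace ℝ (Fin d))), ⟪u, ψ⟫ = 0 → ⟪T u, u⟫ ≤ μ₀ * ‖u‖ ^ 2 := by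
    intro u hu
    have humem : u ∈ (LinearMap.ker (Bop : Lp ℝ 2 (volume : Measure (EuclideanSpace ℝ (Fin d))) →ₗ[ℝ] Lp ℝ 2 (volume : Measure (EuclideanSpace ℝ (Fin d)))))ᗮ := by
      intro z hz
      have hz' : Bop z = 0 := hz
      have hTz : T z = lam • z := by
        have h4 := hBval z
        rw [hz'] at h4
        exact (sub_eq_zero.mp h4.symm).symm
      obtain ⟨cz, rfl⟩ := hψ_span z hTz
      rw [real_inner_smul_left, real_inner_comm, hu, mul_zero]
    have hc := hcoer u humem
    have hBu : ⟪Bop u, u⟫ = lam * ‖u‖ ^ 2 - ⟪T u, u⟫ := by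
      rw [hBval u, inner_sub_left, real_inner_smul_left, real_inner_self_eq_norm_sq]
    rw [hBu] at hc
    have hδle : δ ≤ δ₀ := min_le_left _ _
    have h3 : δ * ‖u‖ ^ 2 ≤ δ₀ * ‖u‖ ^ 2 :=
      mul_le_mul_of_nonneg_right hδle (sq_nonneg _)
    simp only [hμ₀def]
    nlinarith [hc, h3]
  -- positive coefficient c = ⟪ψ, u₀⟫
  set c := (⟪ψ, u₀⟫ : ℝ) with hcdef
  have hc_int : Integrable (fun x => (ψ : EuclideanSpace ℝ (Fin d) → ℝ) x *
      (u₀ : EuclideanSpace ℝ (Fin d) → ℝ) x) volume := by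
    have := L2.integrable_inner (𝕜 := ℝ) ψ u₀
    simpa [RCLike.inner_apply, starRingEnd_apply, mul_comm] using this
  have hc_ae : 0 ≤ᵐ[volume] fun x => (ψ : EuclideanSpace ℝ (Fin d) → ℝ) x *
      (u₀ : EuclideanSpace ℝ (Fin d) → ℝ) x := by
    filter_upwards [hψ_pos, hu₀] with x h1 h2
    exact mul_nonneg h1.le h2
  have hc_eq : c = ∫ x, (ψ : EuclideanSpace ℝ (Fin d) → ℝ) x *
      (u₀ : EuclideanSpace ℝ (Fin d) → ℝ) x := by
    rw [hcdef, L2.inner_def]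
    congr 1
    funext x; simp [mul_comm]
  have hcpos : 0 < c := by
    rcases lt_or_eq_of_le (integral_nonneg_of_ae hc_ae) with h | h
    · rw [hc_eq]; exact h
    · exfalso
      have h0 := (integral_eq_zero_iff_of_nonneg_ae hc_ae hc_int).mp h.symm
      have hzero : (u₀ : EuclideanSpace ℝ (Fin d) → ℝ) =ᵐ[volume] 0 := by
        filter_upwards [h0, hψ_pos] with x h1 h2
        have : (ψ : EuclideanSpace ℝ (Fin d) → ℝ) x * u₀ x = 0 := h1
        rcases mul_eq_zero.mp this with h3 | h3
        · exact absurd h3 (ne_of_gt h2)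
        · exact h3
      exact hu₀ne (Lp.eq_zero_iff_ae_eq_zero.mpr hzero)
  -- the orthogonal part v
  set v := u₀ - c • ψ with hvdef
  have hψψ : (⟪ψ, ψ⟫ : ℝ) = 1 := by
    rw [real_inner_self_eq_norm_sq, hψ_norm]; norm_num
  have hv_orth : (⟪v, ψ⟫ : ℝ) = 0 := by
    rw [hvdef, inner_sub_left, real_inner_smul_left, hψψ, mul_one,
      real_inner_comm, ← hcdef, sub_self]
  -- indicator function
  have hDfin : volume D ≠ ⊤ := hDbdd.measure_lt_top.ne
  set χ : Lp ℝ 2 (volume : Measure (EuclideanSpace ℝ (Fin d))) := indicatorConstLp 2 hDmeas hDfin (1:ℝ) with hχdef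
  have hkey : ∀ f : Lp ℝ 2 (volume : Measure (EuclideanSpace ℝ (Fin d))), (∫ x in D, (f : EuclideanSpace ℝ (Fin d) → ℝ) x) = ⟪χ, f⟫ := by
    intro f
    rw [hχdef, L2.inner_indicatorConstLp_eq_inner_setIntegral ℝ hDmeas hDfin (1:ℝ) f]
    simp [RCLike.inner_apply, starRingEnd_apply]
  -- positivity of ∫_D ψ
  set I := (⟪χ, ψ⟫ : ℝ) with hIdef
  have hI_eq : I = ∫ x in D, (ψ : EuclideanSpace ℝ (Fin d) → ℝ) x := (hkey ψ).symm
  haveI : Fact (volume D < ⊤) := ⟨hDbdd.measure_lt_top⟩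
  have hψ_int : Integrable (ψ : EuclideanSpace ℝ (Fin d) → ℝ) (volume.restrict D) :=
    ((Lp.memLp ψ).restrict D).integrable (by norm_num)
  have hψ_pos_D : ∀ᵐ x ∂(volume.restrict D), 0 < (ψ : EuclideanSpace ℝ (Fin d) → ℝ) x :=
    ae_restrict_of_ae hψ_pos
  have hIpos : 0 < I := by
    rw [hI_eq]
    rcases lt_or_eq_of_le (integral_nonneg_of_ae (hψ_pos_D.mono fun x hx => hx.le)) with h | h
    · exact h
    · exfalso
      have h0 := (integral_eq_zero_iff_of_nonneg_ae (hψ_pos_D.mono fun x hx => hx.le)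
        hψ_int).mp h.symm
      have hfalse : ∀ᵐ _x ∂(volume.restrict D), False := by
        filter_upwards [h0, hψ_pos_D] with x h1 h2
        exact absurd h1 (ne_of_gt h2)
      rw [ae_iff] at hfalse
      simp only [not_false_eq_true, Set.setOf_true] at hfalse
      rw [Measure.restrict_apply_univ] at hfalse
      exact hDpos.ne' hfalse
  -- decomposition of the evolution
  have hdec : ∀ t : ℝ, (NormedSpace.exp (t • T)) u₀
      = (c * Real.exp (t * lam)) • ψ + (NormedSpace.exp (t • T)) v := by
    intro t
    have hu₀dec : u₀ = c • ψ + v := by rw [hvdef]; abel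
    rw [hu₀dec, map_add, ContinuousLinearMap.map_smul, exp_apply_eigen T ψ lam hψ_eig t,
      smul_smul]
  -- the main lower bound
  have hbound : ∀ t : ℝ, 0 ≤ t →
      c * I * Real.exp (t * lam) - (‖χ‖ * ‖v‖) * Real.exp (μ₀ * t)
        ≤ ∫ x in D, ((NormedSpace.exp (t • T)) u₀ : EuclideanSpace ℝ (Fin d) → ℝ) x := by
    intro t ht
    rw [hkey ((NormedSpace.exp (t • T)) u₀)]
    rw [hdec t, inner_add_right, real_inner_smul_right, ← hIdef]
    have hw := norm_exp_le_of_form_bound T hsa ψ lam μ₀ hψ_eig hform v hv_orth t ht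
    have habs : |(⟪χ, (NormedSpace.exp (t • T)) v⟫ : ℝ)| ≤ ‖χ‖ * ‖(NormedSpace.exp (t • T)) v‖ :=
      abs_real_inner_le_norm _ _
    have hlow : -(‖χ‖ * (‖v‖ * Real.exp (μ₀ * t))) ≤ (⟪χ, (NormedSpace.exp (t • T)) v⟫ : ℝ) := by
      have h1 := (abs_le.mp habs).1
      have h2 : ‖χ‖ * ‖(NormedSpace.exp (t • T)) v‖ ≤ ‖χ‖ * (‖v‖ * Real.exp (μ₀ * t)) :=
        mul_le_mul_of_nonneg_left hw (norm_nonneg _)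
      linarith
    nlinarith [hlow]
  -- tendsto
  have hA : 0 < c * I := mul_pos hcpos hIpos
  have htendG : Filter.Tendsto
      (fun t : ℝ => c * I * Real.exp (t * lam) - (‖χ‖ * ‖v‖) * Real.exp (μ₀ * t))
      Filter.atTop Filter.atTop := by
    have heq : ∀ t : ℝ, c * I * Real.exp (t * lam) - (‖χ‖ * ‖v‖) * Real.exp (μ₀ * t)
        = Real.exp (μ₀ * t) * (c * I * Real.exp ((lam - μ₀) * t) - ‖χ‖ * ‖v‖) := by
      intro t
      have h2 : Real.exp (μ₀ * t) * Real.exp ((lam - μ₀) * t) = Real.exp (t * lam) := by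
        rw [← Real.exp_add]; congr 1; ring
      rw [← h2]; ring
    rw [show (fun t : ℝ => c * I * Real.exp (t * lam) - (‖χ‖ * ‖v‖) * Real.exp (μ₀ * t))
        = fun t : ℝ => Real.exp (μ₀ * t) * (c * I * Real.exp ((lam - μ₀) * t) - ‖χ‖ * ‖v‖)
      from funext heq]
    apply Filter.Tendsto.atTop_mul_atTop₀
    · exact Real.tendsto_exp_atTop.comp (Filter.tendsto_id.const_mul_atTop hμ₀pos)
    · have h1 : Filter.Tendsto (fun t : ℝ => c * I * Real.exp ((lam - μ₀) * t))
          Filter.atTop Filter.atTop := by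
        apply Filter.Tendsto.const_mul_atTop hA
        exact Real.tendsto_exp_atTop.comp (Filter.tendsto_id.const_mul_atTop (by linarith))
      have := Filter.tendsto_atTop_add_const_right Filter.atTop (-(‖χ‖ * ‖v‖)) h1
      simpa [sub_eq_add_neg] using this
  apply Filter.tendsto_atTop_mono' Filter.atTop _ htendG
  filter_upwards [Filter.eventually_ge_atTop (0:ℝ)] with t ht
  exact hbound t ht
end
end
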